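/- arXiv:1812.08089 — 6 statements merged into one kernel-verified Lean document; each statement's English description precedes it below -/
import Mathlib

section
/- For matrices A and B of the same size, the absolute value of the trace of A times B is bounded by the nuclear norm of A times the operator norm of B: |tr(AB)| ≤ ‖A‖_n · ‖B‖_op. -/
open Matrix BigOperators

/-- Squared Frobenius norm of a real matrix. -/
noncomputable def frobSq {m n : ℕ} (A : Matrix (Fin m) (Fin n) ℝ) : ℝ :=
  ∑ i, ∑ j, A i j ^ 2

/-- Singular values of a real matrix: square roots of the eigenvalues of `Aᴴ * A`. -/
noncomputable def singVals {m n : ℕ} (A : Matrix (Fin m) (Fin n) ℝ) : Fin n → ℝ :=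
  fun j => Real.sqrt ((Matrix.isHermitian_conjTranspose_mul_self A).eigenvalues j)

/-- Nuclear norm: sum of the singular values. -/
noncomputable def nuclearNorm {m n : ℕ} (A : Matrix (Fin m) (Fin n) ℝ) : ℝ :=
  ∑ j, singVals A j

/-- Operator (spectral) norm: largest singular value. -/
noncomputable def opNorm {m n : ℕ} (A : Matrix (Fin m) (Fin n) ℝ) : ℝ :=
  ⨆ j, singVals A j

lemma abs_dot_le {k : ℕ} (x y : Fin k → ℝ) :
    |x ⬝ᵥ y| ≤ Real.sqrt (x ⬝ᵥ x) * Real.sqrt (y ⬝ᵥ y) := by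
  have h1 := Real.sum_mul_le_sqrt_mul_sqrt Finset.univ x y
  have h2 := Real.sum_mul_le_sqrt_mul_sqrt Finset.univ (fun i => -x i) y
  simp only [dotProduct, pow_two, neg_mul, neg_neg, mul_neg, Finset.sum_neg_distrib] at h1 h2 ⊢
  rw [abs_le]
  exact ⟨by linarith, h1⟩

lemma dot_mulVec_star {k l : ℕ} (U : Matrix (Fin k) (Fin l) ℝ) (x : Fin k → ℝ) (z : Fin l → ℝ) :
    x ⬝ᵥ (U *ᵥ z) = (Uᴴ *ᵥ x) ⬝ᵥ z := by
  simp only [dotProduct, mulVec, dotProduct, Finset.mul_sum, Finset.sum_mul,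
    Matrix.conjTranspose_apply, star_trivial]
  rw [Finset.sum_comm]
  exact Finset.sum_congr rfl fun _ _ => Finset.sum_congr rfl fun _ _ => by ring

lemma quad_form_le {k : ℕ} {M : Matrix (Fin k) (Fin k) ℝ} (hM : M.IsHermitian) {K : ℝ}
    (hK : ∀ j, hM.eigenvalues j ≤ K) (w : Fin k → ℝ) :
    w ⬝ᵥ (M *ᵥ w) ≤ K * (w ⬝ᵥ w) := by
  have hU := (Matrix.mem_unitaryGroup_iff).mp hM.eigenvectorUnitary.2
  have h1 : w ⬝ᵥ (M *ᵥ w)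
      = ∑ j, hM.eigenvalues j * (((hM.eigenvectorUnitary : Matrix (Fin k) (Fin k) ℝ)ᴴ *ᵥ w) j)^2 := by
    conv_lhs => rw [hM.spectral_theorem, Unitary.conjStarAlgAut_apply]
    rw [← mulVec_mulVec, ← mulVec_mulVec, dot_mulVec_star, Matrix.star_eq_conjTranspose]
    simp only [dotProduct, mulVec_diagonal, RCLike.ofReal_real_eq_id, Function.comp_apply, id_eq]
    exact Finset.sum_congr rfl fun j _ => by ring
  have h2 : w ⬝ᵥ w
      = ∑ j, (((hM.eigenvectorUnitary : Matrix (Fin k) (Fin k) ℝ)ᴴ *ᵥ w) j)^2 := by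
    have h3 : w ⬝ᵥ w
        = w ⬝ᵥ (((hM.eigenvectorUnitary : Matrix (Fin k) (Fin k) ℝ)
            * star (hM.eigenvectorUnitary : Matrix (Fin k) (Fin k) ℝ)) *ᵥ w) := by
      rw [hU]; simp
    rw [h3, ← mulVec_mulVec, dot_mulVec_star, Matrix.star_eq_conjTranspose]
    simp [dotProduct, pow_two]
  rw [h1, h2, Finset.mul_sum]
  exact Finset.sum_le_sum fun j _ => mul_le_mul_of_nonneg_right (hK j) (sq_nonneg _)

lemma singVals_nonneg {m n : ℕ} (A : Matrix (Fin m) (Fin n) ℝ) (j : Fin n) :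
    0 ≤ singVals A j := Real.sqrt_nonneg _

lemma le_opNorm {m n : ℕ} (B : Matrix (Fin m) (Fin n) ℝ) (j : Fin n) :
    singVals B j ≤ opNorm B :=
  le_ciSup (Set.Finite.bddAbove (Set.finite_range _)) j

lemma opNorm_nonneg {m n : ℕ} (B : Matrix (Fin m) (Fin n) ℝ) : 0 ≤ opNorm B := by
  rcases Nat.eq_zero_or_pos n with h | h
  · subst h
    simp [opNorm, Real.iSup_of_isEmpty]
  · exact le_trans (singVals_nonneg B ⟨0, h⟩) (le_opNorm B ⟨0, h⟩)

lemma mulVec_dot_le {m n : ℕ} (B : Matrix (Fin n) (Fin m) ℝ) (w : Fin m → ℝ) :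
    (B *ᵥ w) ⬝ᵥ (B *ᵥ w) ≤ opNorm B ^ 2 * (w ⬝ᵥ w) := by
  have h : (B *ᵥ w) ⬝ᵥ (B *ᵥ w) = w ⬝ᵥ ((Bᴴ * B) *ᵥ w) := by
    rw [dot_mulVec_star B (B *ᵥ w) w, dotProduct_comm, ← mulVec_mulVec]
  rw [h]
  refine quad_form_le (isHermitian_conjTranspose_mul_self B) (fun j => ?_) w
  have h1 : Real.sqrt ((isHermitian_conjTranspose_mul_self B).eigenvalues j) ≤ opNorm B :=
    le_opNorm B j
  have h2 := Matrix.eigenvalues_conjTranspose_mul_self_nonneg B j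
  calc (isHermitian_conjTranspose_mul_self B).eigenvalues j
      = Real.sqrt ((isHermitian_conjTranspose_mul_self B).eigenvalues j) ^ 2 := by
        rw [Real.sq_sqrt h2]
    _ ≤ opNorm B ^ 2 := by
        apply pow_le_pow_left₀ (Real.sqrt_nonneg _) h1

lemma conj_entry {k : ℕ} (U N : Matrix (Fin k) (Fin k) ℝ) (j : Fin k) :
    (Uᴴ * N * U) j j = (fun i => U i j) ⬝ᵥ (N *ᵥ fun i => U i j) := by
  simp only [mul_apply, dotProduct, mulVec, conjTranspose_apply, star_trivial,
    Finset.sum_mul, Finset.mul_sum]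
  rw [Finset.sum_comm]
  exact Finset.sum_congr rfl fun _ _ => Finset.sum_congr rfl fun _ _ => by ring

/-- trace duality. For an `m × n` matrix `A` and an `n × m` matrix `B`,
`|tr (A * B)| ≤ ‖A‖ₙ · ‖B‖_op`. -/
theorem stmt0 {m n : ℕ} (A : Matrix (Fin m) (Fin n) ℝ) (B : Matrix (Fin n) (Fin m) ℝ) :
    |Matrix.trace (A * B)| ≤ nuclearNorm A * opNorm B := by
  classical
  have hM := Matrix.isHermitian_conjTranspose_mul_self A
  set U : Matrix (Fin n) (Fin n) ℝ := (hM.eigenvectorUnitary : Matrix (Fin n) (Fin n) ℝ) with hUdef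
  have hUU : U * Uᴴ = 1 := by
    rw [← Matrix.star_eq_conjTranspose]
    exact (Matrix.mem_unitaryGroup_iff).mp hM.eigenvectorUnitary.2
  have htr : Matrix.trace (A * B) = ∑ j, (fun i => U i j) ⬝ᵥ ((B * A) *ᵥ fun i => U i j) := by
    rw [Matrix.trace_mul_comm]
    have : Matrix.trace (B * A) = Matrix.trace (Uᴴ * (B * A) * U) := by
      rw [Matrix.trace_mul_cycle, ← Matrix.mul_assoc, hUU, Matrix.one_mul]
    rw [this]
    simp only [Matrix.trace, Matrix.diag]
    exact Finset.sum_congr rfl fun j _ => conj_entry U (B * A) j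
  rw [htr]
  have key : ∀ j, |(fun i => U i j) ⬝ᵥ ((B * A) *ᵥ fun i => U i j)|
      ≤ singVals A j * opNorm B := by
    intro j
    set v : Fin n → ℝ := fun i => U i j with hvdef
    have hveq : v = ⇑(hM.eigenvectorBasis j) := by
      funext i
      simp [hvdef, hUdef]
    have hv1 : v ⬝ᵥ v = 1 := by
      have hnorm := hM.eigenvectorBasis.orthonormal.1 j
      have h2 : (inner ℝ (hM.eigenvectorBasis j) (hM.eigenvectorBasis j) : ℝ) = 1 := by
        rw [real_inner_self_eq_norm_sq, hnorm]; norm_num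
      have h3 : (inner ℝ (hM.eigenvectorBasis j) (hM.eigenvectorBasis j) : ℝ) = v ⬝ᵥ v := by
        rw [hveq]
        simp only [PiLp.inner_apply, dotProduct, RCLike.inner_apply, conj_trivial]
      rw [← h3, h2]
    set w : Fin m → ℝ := A *ᵥ v with hwdef
    have hww : w ⬝ᵥ w = hM.eigenvalues j := by
      rw [hwdef, dot_mulVec_star A (A *ᵥ v) v, mulVec_mulVec, hveq,
        hM.mulVec_eigenvectorBasis j, smul_dotProduct, ← hveq, hv1]
      simp
    have h1 : v ⬝ᵥ ((B * A) *ᵥ v) = v ⬝ᵥ (B *ᵥ w) := by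
      rw [hwdef, mulVec_mulVec]
    rw [h1]
    calc |v ⬝ᵥ (B *ᵥ w)| ≤ Real.sqrt (v ⬝ᵥ v) * Real.sqrt ((B *ᵥ w) ⬝ᵥ (B *ᵥ w)) :=
          abs_dot_le v (B *ᵥ w)
      _ ≤ 1 * Real.sqrt (opNorm B ^ 2 * (w ⬝ᵥ w)) := by
          rw [hv1, Real.sqrt_one]
          exact mul_le_mul_of_nonneg_left (Real.sqrt_le_sqrt (mulVec_dot_le B w)) zero_le_one
      _ = singVals A j * opNorm B := by
          rw [one_mul, hww, Real.sqrt_mul (sq_nonneg _), Real.sqrt_sq (opNorm_nonneg B)]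
          rw [mul_comm]
          rfl
  calc |∑ j, (fun i => U i j) ⬝ᵥ ((B * A) *ᵥ fun i => U i j)|
      ≤ ∑ j, |(fun i => U i j) ⬝ᵥ ((B * A) *ᵥ fun i => U i j)| :=
        Finset.abs_sum_le_sum_abs _ _
    _ ≤ ∑ j, singVals A j * opNorm B := Finset.sum_le_sum fun j _ => key j
    _ = nuclearNorm A * opNorm B := by rw [nuclearNorm, Finset.sum_mul]
end

section
/- With M, 𝓟 as above, the nuclear norm is additive on M and 𝓟(Δ): ‖𝓟(Δ) + M‖_n = ‖𝓟(Δ)‖_n + ‖M‖_n for any matrix Δ of the same size as M. -/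
open Matrix BigOperators

/- ### Auxiliary lemmas -/

/-- Square root of a positive semidefinite matrix (the definition removed from Mathlib). -/
noncomputable def Matrix.PosSemidef.sqrt {n : ℕ} {A : Matrix (Fin n) (Fin n) ℝ}
    (hA : A.PosSemidef) : Matrix (Fin n) (Fin n) ℝ :=
  hA.1.eigenvectorUnitary.1 * diagonal ((↑) ∘ (Real.sqrt ·) ∘ hA.1.eigenvalues) *
    (star hA.1.eigenvectorUnitary : Matrix (Fin n) (Fin n) ℝ)

open scoped MatrixOrder in
lemma Matrix.PosSemidef.sqrt_eq_cfc {n : ℕ} {A : Matrix (Fin n) (Fin n) ℝ}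
    (hA : A.PosSemidef) : hA.sqrt = CFC.sqrt A := by
  rw [CFC.sqrt_eq_cfc, cfc_nnreal_eq_real _ A, hA.1.cfc_eq, Matrix.IsHermitian.cfc,
    Unitary.conjStarAlgAut_apply, Matrix.PosSemidef.sqrt]
  congr 3
  funext i
  simp [max_eq_left (hA.eigenvalues_nonneg i)]

open scoped MatrixOrder in
lemma Matrix.PosSemidef.posSemidef_sqrt {n : ℕ} {A : Matrix (Fin n) (Fin n) ℝ}
    (hA : A.PosSemidef) : hA.sqrt.PosSemidef := by
  rw [hA.sqrt_eq_cfc]; exact (CFC.sqrt_nonneg A).posSemidef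

open scoped MatrixOrder in
lemma Matrix.PosSemidef.sqrt_mul_self {n : ℕ} {A : Matrix (Fin n) (Fin n) ℝ}
    (hA : A.PosSemidef) : hA.sqrt * hA.sqrt = A := by
  rw [hA.sqrt_eq_cfc]; exact CFC.sqrt_mul_sqrt_self A hA.nonneg

open scoped MatrixOrder in
lemma Matrix.PosSemidef.eq_sqrt_of_sq_eq {n : ℕ} {A B : Matrix (Fin n) (Fin n) ℝ}
    (hB : B.PosSemidef) (hA : A.PosSemidef) (h : B ^ 2 = A) : B = hA.sqrt := by
  rw [hA.sqrt_eq_cfc, eq_comm]; exact CFC.sqrt_unique (by rw [← sq, h]) hB.nonneg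

lemma aux_symm_of_psd {n : ℕ} {A : Matrix (Fin n) (Fin n) ℝ} (hA : A.PosSemidef) : Aᵀ = A := by
  rw [← Matrix.conjTranspose_eq_transpose_of_trivial]; exact hA.1

lemma aux_psd_mul_eq_zero {n m : ℕ} {S : Matrix (Fin n) (Fin n) ℝ} (hS : S.PosSemidef)
    {C : Matrix (Fin n) (Fin m) ℝ} (h : S * (S * C) = 0) : S * C = 0 := by
  have h2 : (S * C)ᴴ * (S * C) = 0 := by
    rw [conjTranspose_mul, hS.1, Matrix.mul_assoc, h, Matrix.mul_zero]
  exact Matrix.conjTranspose_mul_self_eq_zero.mp h2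

lemma aux_sqrt_mul_sqrt_eq_zero {n : ℕ} {A B : Matrix (Fin n) (Fin n) ℝ}
    (hA : A.PosSemidef) (hB : B.PosSemidef) (hAB : A * B = 0) :
    hA.sqrt * hB.sqrt = 0 := by
  have h1 : hA.sqrt * B = 0 :=
    aux_psd_mul_eq_zero hA.posSemidef_sqrt (by rw [← Matrix.mul_assoc, hA.sqrt_mul_self, hAB])
  have h2 : B * hA.sqrt = 0 := by
    have := congrArg transpose h1
    simpa [transpose_mul, aux_symm_of_psd hA.posSemidef_sqrt, aux_symm_of_psd hB] using this
  have h3 : hB.sqrt * hA.sqrt = 0 :=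
    aux_psd_mul_eq_zero hB.posSemidef_sqrt (by rw [← Matrix.mul_assoc, hB.sqrt_mul_self, h2])
  have := congrArg transpose h3
  simpa [transpose_mul, aux_symm_of_psd hA.posSemidef_sqrt,
    aux_symm_of_psd hB.posSemidef_sqrt] using this

lemma aux_trace_sqrt {n : ℕ} {A : Matrix (Fin n) (Fin n) ℝ} (hA : A.PosSemidef) :
    hA.sqrt.trace = ∑ i, Real.sqrt (hA.1.eigenvalues i) := by
  rw [Matrix.PosSemidef.sqrt, Matrix.trace_mul_cycle]
  rw [show (star hA.1.eigenvectorUnitary.1 : Matrix (Fin n) (Fin n) ℝ) *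
      hA.1.eigenvectorUnitary.1 = 1 from
    Matrix.mem_unitaryGroup_iff'.mp hA.1.eigenvectorUnitary.2, one_mul, Matrix.trace_diagonal]
  simp

lemma aux_nuclearNorm_eq_trace {m n : ℕ} (A : Matrix (Fin m) (Fin n) ℝ) :
    nuclearNorm A = (Matrix.posSemidef_conjTranspose_mul_self A).sqrt.trace := by
  rw [aux_trace_sqrt]
  rfl

/-- The nuclear norm is additive on `M` and `𝓟(Δ) = Uc Ucᵀ Δ Vc Vcᵀ`,
since `M` and `𝓟(Δ)` have orthogonal column and row spaces. -/
theorem stmt4 {N T k l : ℕ} (M : Matrix (Fin N) (Fin T) ℝ)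
    (Uc : Matrix (Fin N) (Fin k) ℝ) (Vc : Matrix (Fin T) (Fin l) ℝ)
    (hUc : Ucᵀ * Uc = 1) (hVc : Vcᵀ * Vc = 1)
    (hUcM : Ucᵀ * M = 0) (hMVc : M * Vc = 0)
    (Δ : Matrix (Fin N) (Fin T) ℝ) :
    nuclearNorm (Uc * Ucᵀ * Δ * (Vc * Vcᵀ) + M) =
      nuclearNorm (Uc * Ucᵀ * Δ * (Vc * Vcᵀ)) + nuclearNorm M := by
  set P : Matrix (Fin N) (Fin T) ℝ := Uc * Ucᵀ * Δ * (Vc * Vcᵀ) with hP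
  have hMt : Mᴴ = Mᵀ := Matrix.conjTranspose_eq_transpose_of_trivial M
  have hPt : Pᴴ = Pᵀ := Matrix.conjTranspose_eq_transpose_of_trivial P
  have hVcMt : Vcᵀ * Mᵀ = 0 := by
    have := congrArg transpose hMVc
    simpa [transpose_mul] using this
  -- P * Mᴴ = 0
  have hPM : P * Mᴴ = 0 := by
    rw [hMt, hP]
    simp only [Matrix.mul_assoc]
    rw [hVcMt]
    simp
  -- M * Pᴴ = 0
  have hMP : M * Pᴴ = 0 := by
    have := congrArg transpose hPM
    simpa [transpose_mul, hMt, hPt] using this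
  -- Pᴴ * M = 0
  have hPtM : Pᴴ * M = 0 := by
    rw [hPt, hP]
    simp only [transpose_mul, transpose_transpose, Matrix.mul_assoc]
    rw [hUcM]
    simp
  -- Mᴴ * P = 0
  have hMtP : Mᴴ * P = 0 := by
    have := congrArg transpose hPtM
    simpa [transpose_mul, hMt, hPt] using this
  have hA' : (Pᴴ * P).PosSemidef := Matrix.posSemidef_conjTranspose_mul_self P
  have hB' : (Mᴴ * M).PosSemidef := Matrix.posSemidef_conjTranspose_mul_self M
  have hab : (Pᴴ * P) * (Mᴴ * M) = 0 := by
    rw [show (Pᴴ * P) * (Mᴴ * M) = Pᴴ * ((P * Mᴴ) * M) by simp only [Matrix.mul_assoc],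
      hPM, Matrix.zero_mul, Matrix.mul_zero]
  have hba : (Mᴴ * M) * (Pᴴ * P) = 0 := by
    rw [show (Mᴴ * M) * (Pᴴ * P) = Mᴴ * ((M * Pᴴ) * P) by simp only [Matrix.mul_assoc],
      hMP, Matrix.zero_mul, Matrix.mul_zero]
  have h12 : hA'.sqrt * hB'.sqrt = 0 := aux_sqrt_mul_sqrt_eq_zero hA' hB' hab
  have h21 : hB'.sqrt * hA'.sqrt = 0 := aux_sqrt_mul_sqrt_eq_zero hB' hA' hba
  have hSsq : (hA'.sqrt + hB'.sqrt) ^ 2 = (P + M)ᴴ * (P + M) := by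
    rw [sq, add_mul, mul_add, mul_add, h12, h21, hA'.sqrt_mul_self, hB'.sqrt_mul_self,
      conjTranspose_add, Matrix.add_mul, Matrix.mul_add, Matrix.mul_add, hPtM, hMtP]
  have hsum : hA'.sqrt + hB'.sqrt = (Matrix.posSemidef_conjTranspose_mul_self (P + M)).sqrt :=
    Matrix.PosSemidef.eq_sqrt_of_sq_eq (hA'.posSemidef_sqrt.add hB'.posSemidef_sqrt) _ hSsq
  rw [aux_nuclearNorm_eq_trace, aux_nuclearNorm_eq_trace, aux_nuclearNorm_eq_trace,
    ← hsum, Matrix.trace_add]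
end

section
/- In the iterative singular value thresholding algorithm for joint low-rank estimation, the objective F(Θ, M) = ‖Y − M − X⊙Θ‖_F² + ν₂‖M‖_n + ν₁‖Θ‖_n is monotonically nonincreasing: F(Θ_{k+1}, M_{k+1}) ≤ F(Θ_{k+1}, M_k) ≤ F(Θ_k, M_k) for all k ≥ 0, where Θ_{k+1} = S_{τν₁/2}(Θ_k − τX⊙(X⊙Θ_k − Y + M_k)) and M_{k+1} = S_{ν₂/2}(Y − X⊙Θ_{k+1}), for any step size τ ∈ (0, 1/max_{it}x_{it}²). -/
open Matrix BigOperators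

/-- `B` is the output of the soft singular value thresholding operator `S_lam` applied to `A`,
characterized by its proximal property: `S_lam A` is the minimizer of
`‖A − B‖_F² + 2·lam·‖B‖ₙ` (cf. Statement 9). -/
def IsSVT {N T : ℕ} (lam : ℝ) (A B : Matrix (Fin N) (Fin T) ℝ) : Prop :=
  ∀ C : Matrix (Fin N) (Fin T) ℝ,
    frobSq (A - B) + 2 * lam * nuclearNorm B ≤ frobSq (A - C) + 2 * lam * nuclearNorm C

/-- The nuclear-norm penalized objective `F(Θ, M)`. -/
noncomputable def Fobj {N T : ℕ} (Y X : Matrix (Fin N) (Fin T) ℝ) (ν₁ ν₂ : ℝ)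
    (Θ M : Matrix (Fin N) (Fin T) ℝ) : ℝ :=
  frobSq (Y - M - X ⊙ Θ) + ν₂ * nuclearNorm M + ν₁ * nuclearNorm Θ

lemma frobSq_sub_comm {m n : ℕ} (A B : Matrix (Fin m) (Fin n) ℝ) :
    frobSq (A - B) = frobSq (B - A) := by
  unfold frobSq
  refine Finset.sum_congr rfl fun i _ => Finset.sum_congr rfl fun j _ => ?_
  simp [Matrix.sub_apply]; ring

lemma ptwise (τ x z θ θ' : ℝ) (hx : τ * x^2 ≤ 1) :
    τ * (z - x*θ')^2 ≤ τ * (z - x*θ)^2 + (θ' - (θ - τ*(x*(x*θ - z))))^2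
      - (θ - (θ - τ*(x*(x*θ - z))))^2 := by
  nlinarith [mul_le_mul_of_nonneg_right hx (sq_nonneg (θ'-θ))]

/-- monotone descent of the SVT iteration. Under the updates
`Θ_{k+1} = S_{τν₁/2}(Θ_k − τ X⊙(X⊙Θ_k − Y + M_k))` and `M_{k+1} = S_{ν₂/2}(Y − X⊙Θ_{k+1})`,
with step size `τ ∈ (0, 1/max_{it} x_{it}²)`, the objective is monotonically nonincreasing:
`F(Θ_{k+1}, M_{k+1}) ≤ F(Θ_{k+1}, M_k) ≤ F(Θ_k, M_k)` for all `k ≥ 0`. -/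
theorem stmt6 {N T : ℕ} (Y X : Matrix (Fin N) (Fin T) ℝ) (ν₁ ν₂ τ : ℝ)
    (hν₁ : 0 < ν₁) (hν₂ : 0 < ν₂) (hτ : 0 < τ) (hτX : ∀ i t, τ * X i t ^ 2 < 1)
    (Θ M : ℕ → Matrix (Fin N) (Fin T) ℝ)
    (hΘ : ∀ k, IsSVT (τ * ν₁ / 2) (Θ k - τ • (X ⊙ (X ⊙ Θ k - Y + M k))) (Θ (k + 1)))
    (hM : ∀ k, IsSVT (ν₂ / 2) (Y - X ⊙ Θ (k + 1)) (M (k + 1))) :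
    ∀ k : ℕ,
      Fobj Y X ν₁ ν₂ (Θ (k + 1)) (M (k + 1)) ≤ Fobj Y X ν₁ ν₂ (Θ (k + 1)) (M k) ∧
      Fobj Y X ν₁ ν₂ (Θ (k + 1)) (M k) ≤ Fobj Y X ν₁ ν₂ (Θ k) (M k) := by
  intro k
  set Θ' := Θ (k + 1) with hΘ'
  set M' := M (k + 1) with hM'
  set A := Θ k - τ • (X ⊙ (X ⊙ Θ k - Y + M k)) with hA
  constructor
  · -- M-step
    have h := hM k (M k)
    have e2 : 2 * (ν₂ / 2) = ν₂ := by ring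
    rw [e2] at h
    simp only [Fobj]
    rw [sub_right_comm Y M' (X ⊙ Θ'), sub_right_comm Y (M k) (X ⊙ Θ')]
    linarith
  · -- Θ-step
    have hpt : ∀ i j, τ * ((Y - M k - X ⊙ Θ') i j)^2 ≤
        τ * ((Y - M k - X ⊙ Θ k) i j)^2 + ((Θ' - A) i j)^2 - ((Θ k - A) i j)^2 := by
      intro i j
      have h := ptwise τ (X i j) (Y i j - M k i j) (Θ k i j) (Θ' i j)
        (le_of_lt (hτX i j))
      simp only [hA, Matrix.sub_apply, Matrix.add_apply, Matrix.hadamard_apply,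
        Matrix.smul_apply, smul_eq_mul]
      nlinarith [h]
    have hsum : τ * frobSq (Y - M k - X ⊙ Θ') ≤
        τ * frobSq (Y - M k - X ⊙ Θ k) + frobSq (Θ' - A) - frobSq (Θ k - A) := by
      have h : ∑ i, ∑ j, τ * ((Y - M k - X ⊙ Θ') i j)^2 ≤
          ∑ i, ∑ j, (τ * ((Y - M k - X ⊙ Θ k) i j)^2 + ((Θ' - A) i j)^2
            - ((Θ k - A) i j)^2) :=
        Finset.sum_le_sum fun i _ => Finset.sum_le_sum fun j _ => hpt i j
      simpa [frobSq, Finset.sum_add_distrib, Finset.sum_sub_distrib, Finset.mul_sum]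
        using h
    have hB := hΘ k (Θ k)
    rw [frobSq_sub_comm A Θ', frobSq_sub_comm A (Θ k)] at hB
    have e1 : 2 * (τ * ν₁ / 2) = τ * ν₁ := by ring
    rw [e1] at hB
    -- combine: τ * (lhs) ≤ τ * (rhs)
    have hcomb : τ * (frobSq (Y - M k - X ⊙ Θ') + ν₁ * nuclearNorm Θ') ≤
        τ * (frobSq (Y - M k - X ⊙ Θ k) + ν₁ * nuclearNorm (Θ k)) := by
      nlinarith [hsum, hB]
    have hdiv := (mul_le_mul_iff_right₀ hτ).mp hcomb
    simp only [Fobj]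
    linarith
end

section
/- Descent lemma for the joint SVT iteration: for any step size τ ∈ (0, 1/max_{it}x_{it}²), any matrices (Θ, M), and any k ≥ 1, F(Θ, M) − F(Θ_{k+1}, M_{k+1}) ≥ τ⁻¹(‖Θ_{k+1} − Θ‖_F² − ‖Θ_k − Θ‖_F²). -/
open Matrix BigOperators

namespace Stmt8Aux

/-- Frobenius inner product. -/
noncomputable def fi {N T : ℕ} (U V : Matrix (Fin N) (Fin T) ℝ) : ℝ :=
  ∑ i, ∑ j, U i j * V i j

lemma frobSq_nonneg {N T : ℕ} (A : Matrix (Fin N) (Fin T) ℝ) : 0 ≤ frobSq A :=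
  Finset.sum_nonneg fun _ _ => Finset.sum_nonneg fun _ _ => sq_nonneg _

lemma fi_smul_add {N T : ℕ} (W B C : Matrix (Fin N) (Fin T) ℝ) (s t : ℝ) :
    fi W (s • B + t • C) = s * fi W B + t * fi W C := by
  simp only [fi, Matrix.add_apply, Matrix.smul_apply, smul_eq_mul, Finset.mul_sum,
    ← Finset.sum_add_distrib]
  exact Finset.sum_congr rfl fun i _ => Finset.sum_congr rfl fun j _ => by ring

lemma frobSq_sub_comb {N T : ℕ} (A B C : Matrix (Fin N) (Fin T) ℝ) (t : ℝ) :
    frobSq (A - (B + t • (C - B))) =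
      frobSq (A - B) - 2 * t * fi (A - B) (C - B) + t ^ 2 * frobSq (C - B) := by
  simp only [frobSq, fi, Matrix.sub_apply, Matrix.add_apply, Matrix.smul_apply, smul_eq_mul,
    Finset.mul_sum, ← Finset.sum_sub_distrib, ← Finset.sum_add_distrib]
  exact Finset.sum_congr rfl fun i _ => Finset.sum_congr rfl fun j _ => by ring

/-- Spectral setup for `Aᴴ * A`. -/
lemma spectral_setup {N T : ℕ} (A : Matrix (Fin N) (Fin T) ℝ) :
    ∃ v : Fin T → (Fin T → ℝ),
      (∀ j l, v j ⬝ᵥ v l = if j = l then 1 else 0) ∧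
      (∀ u w : Fin T → ℝ, u ⬝ᵥ w = ∑ j, (u ⬝ᵥ v j) * (w ⬝ᵥ v j)) ∧
      (∀ j l, (A *ᵥ v j) ⬝ᵥ (A *ᵥ v l) = if j = l then (singVals A j)^2 else 0) ∧
      (∀ j, 0 ≤ singVals A j) := by
  have hA := Matrix.isHermitian_conjTranspose_mul_self A
  set b := hA.eigenvectorBasis with hb
  refine ⟨fun j => ⇑(b j), ?_, ?_, ?_, fun j => Real.sqrt_nonneg _⟩
  · intro j l
    have h := orthonormal_iff_ite.mp b.orthonormal j l
    simpa [PiLp.inner_apply, RCLike.inner_apply, starRingEnd_apply, dotProduct, mul_comm] using h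
  · intro u w
    have h := b.sum_inner_mul_inner ((WithLp.equiv 2 (Fin T → ℝ)).symm u)
      ((WithLp.equiv 2 (Fin T → ℝ)).symm w)
    simp only [PiLp.inner_apply, RCLike.inner_apply, starRingEnd_apply, star_trivial,
      WithLp.equiv_symm_apply, WithLp.ofLp_toLp] at h
    simp only [dotProduct]
    rw [Finset.sum_congr rfl fun i _ => mul_comm (u i) (w i), ← h]
    refine Finset.sum_congr rfl fun j _ => ?_
    congr 1 <;>
      exact Finset.sum_congr rfl fun i _ => by
        ring
  · intro j l
    have h1 : (A *ᵥ ⇑(b j)) ⬝ᵥ (A *ᵥ ⇑(b l)) = ⇑(b j) ⬝ᵥ ((Aᴴ * A) *ᵥ ⇑(b l)) := by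
      rw [← Matrix.mulVec_mulVec, Matrix.conjTranspose_eq_transpose_of_trivial,
        Matrix.mulVec_transpose, dotProduct_comm (⇑(b j)),
        ← dotProduct_mulVec, dotProduct_comm]
    have h2 : (Aᴴ * A) *ᵥ ⇑(b l) = hA.eigenvalues l • ⇑(b l) := hA.mulVec_eigenvectorBasis l
    have h3 : ⇑(b j) ⬝ᵥ ⇑(b l) = if j = l then 1 else 0 := by
      have h := orthonormal_iff_ite.mp b.orthonormal j l
      simpa [PiLp.inner_apply, RCLike.inner_apply, starRingEnd_apply, dotProduct, mul_comm] using h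
    have hnn : 0 ≤ hA.eigenvalues j :=
      (Matrix.posSemidef_conjTranspose_mul_self A).eigenvalues_nonneg j
    rw [h1, h2, dotProduct_smul, h3]
    simp only [singVals, smul_eq_mul]
    rcases eq_or_ne j l with rfl | hjl
    · simp [Real.sq_sqrt hnn]
      exact (Real.sq_sqrt hnn).symm
    · simp [hjl]

lemma dot_self_nonneg {n : ℕ} (x : Fin n → ℝ) : 0 ≤ x ⬝ᵥ x :=
  Finset.sum_nonneg fun i _ => mul_self_nonneg _

/-- Cauchy–Schwarz for the dot product. -/
lemma dot_cs {n : ℕ} (x y : Fin n → ℝ) :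
    x ⬝ᵥ y ≤ Real.sqrt (x ⬝ᵥ x) * Real.sqrt (y ⬝ᵥ y) := by
  have h := Finset.sum_mul_sq_le_sq_mul_sq Finset.univ x y
  calc x ⬝ᵥ y ≤ |x ⬝ᵥ y| := le_abs_self _
    _ = Real.sqrt ((x ⬝ᵥ y) ^ 2) := (Real.sqrt_sq_eq_abs _).symm
    _ ≤ Real.sqrt ((x ⬝ᵥ x) * (y ⬝ᵥ y)) := by
        apply Real.sqrt_le_sqrt
        simpa [dotProduct, sq] using h
    _ = Real.sqrt (x ⬝ᵥ x) * Real.sqrt (y ⬝ᵥ y) :=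
        Real.sqrt_mul (dot_self_nonneg x) _

/-- Expansion of the Frobenius inner product along an "orthonormal basis". -/
lemma fi_eq_sum_dot {N T : ℕ} (W B : Matrix (Fin N) (Fin T) ℝ) (v : Fin T → (Fin T → ℝ))
    (hpar : ∀ u w : Fin T → ℝ, u ⬝ᵥ w = ∑ j, (u ⬝ᵥ v j) * (w ⬝ᵥ v j)) :
    fi W B = ∑ j, (W *ᵥ v j) ⬝ᵥ (B *ᵥ v j) := by
  have h1 : fi W B = ∑ i, (fun t => W i t) ⬝ᵥ (fun t => B i t) := rfl
  rw [h1]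
  have h2 : ∀ i, (fun t => W i t) ⬝ᵥ (fun t => B i t)
      = ∑ j, ((fun t => W i t) ⬝ᵥ v j) * ((fun t => B i t) ⬝ᵥ v j) := fun i => hpar _ _
  rw [Finset.sum_congr rfl fun i _ => h2 i, Finset.sum_comm]
  rfl

/-- Von Neumann-type inequality: a pointwise ℓ²-contraction pairs below the nuclear norm. -/
lemma fi_le_nuclearNorm {N T : ℕ} (W B : Matrix (Fin N) (Fin T) ℝ)
    (hW : ∀ q : Fin T → ℝ, (W *ᵥ q) ⬝ᵥ (W *ᵥ q) ≤ q ⬝ᵥ q) :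
    fi W B ≤ nuclearNorm B := by
  obtain ⟨v, horth, hpar, heig, hnn⟩ := spectral_setup B
  rw [fi_eq_sum_dot W B v hpar]
  refine le_trans (Finset.sum_le_sum fun j _ => dot_cs _ _) ?_
  unfold nuclearNorm
  refine Finset.sum_le_sum fun j _ => ?_
  have h1 : Real.sqrt ((W *ᵥ v j) ⬝ᵥ (W *ᵥ v j)) ≤ 1 := by
    have := Real.sqrt_le_sqrt (hW (v j))
    rwa [horth j j, if_pos rfl, Real.sqrt_one] at this
  have h2 : Real.sqrt ((B *ᵥ v j) ⬝ᵥ (B *ᵥ v j)) = singVals B j := by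
    rw [heig j j, if_pos rfl, Real.sqrt_sq (hnn j)]
  rw [h2]
  calc Real.sqrt ((W *ᵥ v j) ⬝ᵥ (W *ᵥ v j)) * singVals B j ≤ 1 * singVals B j :=
        mul_le_mul_of_nonneg_right h1 (hnn j)
    _ = singVals B j := one_mul _

/-- Dot product of finite sums of vectors. -/
lemma sum_dot {n K : ℕ} (f : Fin K → Fin n → ℝ) (y : Fin n → ℝ) :
    (fun i => ∑ l, f l i) ⬝ᵥ y = ∑ l, f l ⬝ᵥ y := by
  simp only [dotProduct, Finset.sum_mul]
  exact Finset.sum_comm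

lemma dot_sum_sum {n K : ℕ} (f g : Fin K → Fin n → ℝ) :
    (fun i => ∑ j, f j i) ⬝ᵥ (fun i => ∑ l, g l i) = ∑ j, ∑ l, (f j) ⬝ᵥ (g l) := by
  rw [sum_dot]
  refine Finset.sum_congr rfl fun j _ => ?_
  simp only [dotProduct, Finset.mul_sum]
  exact Finset.sum_comm

/-- Dual attainment: there is an ℓ²-contraction achieving the nuclear norm. -/
lemma exists_dual {N T : ℕ} (A : Matrix (Fin N) (Fin T) ℝ) :
    ∃ W : Matrix (Fin N) (Fin T) ℝ,
      (∀ q : Fin T → ℝ, (W *ᵥ q) ⬝ᵥ (W *ᵥ q) ≤ q ⬝ᵥ q) ∧ fi W A = nuclearNorm A := by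
  obtain ⟨v, horth, hpar, heig, hnn⟩ := spectral_setup A
  classical
  set c : Fin T → ℝ := fun j => if singVals A j = 0 then 0 else (singVals A j)⁻¹ with hc
  set W : Matrix (Fin N) (Fin T) ℝ :=
    Matrix.of (fun i t => ∑ j, c j * (A *ᵥ v j) i * v j t) with hWdef
  have hWq : ∀ q : Fin T → ℝ,
      W *ᵥ q = fun i => ∑ j, ((c j * (v j ⬝ᵥ q)) • (A *ᵥ v j)) i := by
    intro q
    funext i
    show ∑ t, (∑ j, c j * (A *ᵥ v j) i * v j t) * q t = _
    calc ∑ t, (∑ j, c j * (A *ᵥ v j) i * v j t) * q t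
        = ∑ t, ∑ j, c j * (A *ᵥ v j) i * v j t * q t :=
          Finset.sum_congr rfl fun t _ => Finset.sum_mul _ _ _
      _ = ∑ j, ∑ t, c j * (A *ᵥ v j) i * v j t * q t := Finset.sum_comm
      _ = ∑ j, ((c j * (v j ⬝ᵥ q)) • (A *ᵥ v j)) i := by
          refine Finset.sum_congr rfl fun j _ => ?_
          simp only [Pi.smul_apply, smul_eq_mul, dotProduct, Finset.mul_sum,
            Finset.sum_mul]
          exact Finset.sum_congr rfl fun t _ => by ring
  have hcsq : ∀ j, (c j * c j) * ((singVals A j) ^ 2) ≤ 1 := by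
    intro j
    rcases eq_or_ne (singVals A j) 0 with h | h
    · simp [hc, h]
    · simp only [hc, if_neg h]
      rw [sq]
      field_simp
      exact le_refl _
  have hpair : ∀ q r : Fin T → ℝ, ∀ j l,
      ((c j * (v j ⬝ᵥ q)) • (A *ᵥ v j)) ⬝ᵥ ((c l * (v l ⬝ᵥ r)) • (A *ᵥ v l))
        = (c j * (v j ⬝ᵥ q)) * ((c l * (v l ⬝ᵥ r)) *
            (if j = l then (singVals A j) ^ 2 else 0)) := by
    intro q r j l
    rw [smul_dotProduct, dotProduct_smul, ← heig j l]
    simp [mul_assoc]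
  refine ⟨W, ?_, ?_⟩
  · intro q
    rw [hWq q, dot_sum_sum]
    have h1 : ∀ j, ∑ l, ((c j * (v j ⬝ᵥ q)) • (A *ᵥ v j)) ⬝ᵥ ((c l * (v l ⬝ᵥ q)) • (A *ᵥ v l))
        = (c j * c j) * ((singVals A j) ^ 2) * (v j ⬝ᵥ q) ^ 2 := by
      intro j
      rw [Finset.sum_congr rfl fun l _ => hpair q q j l, Finset.sum_eq_single j]
      · rw [if_pos rfl]; ring
      · intro l _ hlj
        simp [if_neg (Ne.symm hlj)]
      · intro h; exact absurd (Finset.mem_univ j) h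
    rw [Finset.sum_congr rfl fun j _ => h1 j]
    have hq : q ⬝ᵥ q = ∑ j, (v j ⬝ᵥ q) ^ 2 := by
      rw [hpar q q]
      exact Finset.sum_congr rfl fun j _ => by
        rw [dotProduct_comm (v j) q]; ring
    rw [hq]
    refine Finset.sum_le_sum fun j _ => ?_
    calc (c j * c j) * ((singVals A j) ^ 2) * (v j ⬝ᵥ q) ^ 2
        ≤ 1 * (v j ⬝ᵥ q) ^ 2 := mul_le_mul_of_nonneg_right (hcsq j) (sq_nonneg _)
      _ = (v j ⬝ᵥ q) ^ 2 := one_mul _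
  · rw [fi_eq_sum_dot W A v hpar]
    unfold nuclearNorm
    refine Finset.sum_congr rfl fun j _ => ?_
    rw [hWq (v j), sum_dot]
    have h2 : ∀ l, ((c l * (v l ⬝ᵥ v j)) • (A *ᵥ v l)) ⬝ᵥ (A *ᵥ v j)
        = (c l * (v l ⬝ᵥ v j)) * (if l = j then (singVals A l) ^ 2 else 0) := by
      intro l
      rw [smul_dotProduct, ← heig l j, smul_eq_mul]
    rw [Finset.sum_congr rfl fun l _ => h2 l, Finset.sum_eq_single j]
    · rw [if_pos rfl, horth j j, if_pos rfl]
      rcases eq_or_ne (singVals A j) 0 with h | h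
      · simp [hc, h]
      · simp only [hc, if_neg h, mul_one]
        rw [sq]
        field_simp
    · intro l _ hlj
      simp [if_neg hlj]
    · intro h; exact absurd (Finset.mem_univ j) h

/-- Convexity-type inequality for the nuclear norm. -/
lemma nuclearNorm_combo {N T : ℕ} {s t : ℝ} (hs : 0 ≤ s) (ht : 0 ≤ t)
    (B C : Matrix (Fin N) (Fin T) ℝ) :
    nuclearNorm (s • B + t • C) ≤ s * nuclearNorm B + t * nuclearNorm C := by
  obtain ⟨W, hW, hfi⟩ := exists_dual (s • B + t • C)
  rw [← hfi, fi_smul_add]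
  have h1 := fi_le_nuclearNorm W B hW
  have h2 := fi_le_nuclearNorm W C hW
  have := mul_le_mul_of_nonneg_left h1 hs
  have := mul_le_mul_of_nonneg_left h2 ht
  linarith

lemma eps_le {a b : ℝ} (h : ∀ ε : ℝ, 0 < ε → a ≤ b + ε) : a ≤ b := by
  by_contra hab
  push_neg at hab
  have := h ((a - b) / 2) (by linarith)
  linarith

/-- Subgradient inequality extracted from the SVT proximal property. -/
lemma prox_subgrad {N T : ℕ} {lam : ℝ} (hlam : 0 ≤ lam) {A B : Matrix (Fin N) (Fin T) ℝ}
    (h : IsSVT lam A B) (C : Matrix (Fin N) (Fin T) ℝ) :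
    fi (A - B) (C - B) ≤ lam * (nuclearNorm C - nuclearNorm B) := by
  set fs := frobSq (C - B) with hfs
  have hfs0 : 0 ≤ fs := frobSq_nonneg _
  refine eps_le fun ε hε => ?_
  set t : ℝ := min 1 (ε / (fs + 1)) with htdef
  have ht0 : 0 < t := lt_min one_pos (div_pos hε (by linarith))
  have ht1 : t ≤ 1 := min_le_left _ _
  have hsvt := h (B + t • (C - B))
  rw [frobSq_sub_comb] at hsvt
  have hcomb : nuclearNorm (B + t • (C - B)) ≤ (1 - t) * nuclearNorm B + t * nuclearNorm C := by
    have heq : B + t • (C - B) = (1 - t) • B + t • C := by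
      ext i j
      simp only [Matrix.add_apply, Matrix.smul_apply, Matrix.sub_apply, smul_eq_mul]
      ring
    rw [heq]
    exact nuclearNorm_combo (by linarith) ht0.le B C
  have key : 2 * t * fi (A - B) (C - B)
      ≤ t ^ 2 * fs + 2 * lam * t * (nuclearNorm C - nuclearNorm B) := by
    nlinarith [mul_le_mul_of_nonneg_left hcomb (by linarith : (0:ℝ) ≤ 2 * lam)]
  have hdiv : fi (A - B) (C - B) ≤ lam * (nuclearNorm C - nuclearNorm B) + t * fs / 2 := by
    have h2t : (0:ℝ) < 2 * t := by linarith
    have : (2 * t) * fi (A - B) (C - B)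
        ≤ (2 * t) * (lam * (nuclearNorm C - nuclearNorm B) + t * fs / 2) := by
      nlinarith [key]
    exact le_of_mul_le_mul_left this h2t
  have htfs : t * fs ≤ ε := by
    have h3 : t ≤ ε / (fs + 1) := min_le_right _ _
    have h4 : t * fs ≤ (ε / (fs + 1)) * fs := mul_le_mul_of_nonneg_right h3 hfs0
    have h5 : (ε / (fs + 1)) * fs ≤ ε := by
      rw [div_mul_eq_mul_div, div_le_iff₀ (by linarith : (0:ℝ) < fs + 1)]
      nlinarith
    linarith
  linarith

end Stmt8Aux

open Stmt8Aux in
/-- descent lemma for the joint SVT iteration. For any `(Θ, M)`, any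
step size `τ ∈ (0, 1/max_{it} x_{it}²)`, and any `k ≥ 1`,
`F(Θ, M) − F(Θ_{k+1}, M_{k+1}) ≥ τ⁻¹ (‖Θ_{k+1} − Θ‖_F² − ‖Θ_k − Θ‖_F²)`. -/
theorem stmt8 {N T : ℕ} (Y X : Matrix (Fin N) (Fin T) ℝ) (ν₁ ν₂ τ : ℝ)
    (hν₁ : 0 < ν₁) (hν₂ : 0 < ν₂) (hτ : 0 < τ) (hτX : ∀ i t, τ * X i t ^ 2 < 1)
    (Θ M : ℕ → Matrix (Fin N) (Fin T) ℝ)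
    (hΘ : ∀ k, IsSVT (τ * ν₁ / 2) (Θ k - τ • (X ⊙ (X ⊙ Θ k - Y + M k))) (Θ (k + 1)))
    (hM : ∀ k, IsSVT (ν₂ / 2) (Y - X ⊙ Θ (k + 1)) (M (k + 1))) :
    ∀ (Θ' M' : Matrix (Fin N) (Fin T) ℝ) (k : ℕ), 1 ≤ k →
      Fobj Y X ν₁ ν₂ Θ' M' - Fobj Y X ν₁ ν₂ (Θ (k + 1)) (M (k + 1)) ≥
        τ⁻¹ * (frobSq (Θ (k + 1) - Θ') - frobSq (Θ k - Θ')) := by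
  intro Θ' M' k hk
  obtain ⟨m, rfl⟩ : ∃ m, k = m + 1 := ⟨k - 1, (Nat.succ_pred_eq_of_pos hk).symm⟩
  -- notation
  have hP1 : fi ((Θ (m+1) - τ • (X ⊙ (X ⊙ Θ (m+1) - Y + M (m+1)))) - Θ (m+1+1))
      (Θ' - Θ (m+1+1)) ≤ (τ * ν₁ / 2) * (nuclearNorm Θ' - nuclearNorm (Θ (m+1+1))) :=
    prox_subgrad (by positivity) (hΘ (m+1)) Θ'
  have hP2 : fi ((Y - X ⊙ Θ (m+1)) - M (m+1)) (M' - M (m+1))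
      ≤ (ν₂ / 2) * (nuclearNorm M' - nuclearNorm (M (m+1))) :=
    prox_subgrad (by positivity) (hM m) M'
  have hP3 := hM (m+1) (M (m+1))
  rw [sub_right_comm Y (X ⊙ Θ (m+1+1)) (M (m+1+1)),
    sub_right_comm Y (X ⊙ Θ (m+1+1)) (M (m+1))] at hP3
  -- key quadratic inequality
  have SQ : frobSq (Θ (m+1+1) - Θ') - frobSq (Θ (m+1) - Θ')
      ≤ τ * frobSq (Y - M' - X ⊙ Θ') - τ * frobSq (Y - M (m+1) - X ⊙ Θ (m+1+1))
        + 2 * τ * fi ((Y - X ⊙ Θ (m+1)) - M (m+1)) (M' - M (m+1))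
        + 2 * fi ((Θ (m+1) - τ • (X ⊙ (X ⊙ Θ (m+1) - Y + M (m+1)))) - Θ (m+1+1))
            (Θ' - Θ (m+1+1)) := by
    simp only [frobSq, fi, Matrix.sub_apply, Matrix.add_apply, Matrix.smul_apply,
      Matrix.hadamard_apply, smul_eq_mul, Finset.mul_sum, ← Finset.sum_sub_distrib,
      ← Finset.sum_add_distrib]
    refine Finset.sum_le_sum fun i _ => Finset.sum_le_sum fun t _ => ?_
    nlinarith [mul_nonneg hτ.le
        (sq_nonneg (M (m+1) i t - M' i t + X i t * (Θ (m+1) i t - Θ' i t))),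
      mul_nonneg (sub_nonneg.mpr (hτX i t).le) (sq_nonneg (Θ (m+1+1) i t - Θ (m+1) i t)),
      sq_nonneg (Θ (m+1+1) i t - Θ (m+1) i t), hτ.le]
  rw [ge_iff_le, inv_mul_le_iff₀ hτ]
  simp only [Fobj]
  have hP2' := mul_le_mul_of_nonneg_left hP2 hτ.le
  have hP3' := mul_le_mul_of_nonneg_left hP3 hτ.le
  nlinarith [hP1, hP2', hP3', SQ]
end

section
/- The soft singular value thresholding operator solves the nuclear-norm proximal problem: for any matrix Y and λ > 0, S_λ(Y) = argmin_M ‖Y − M‖_F² + 2λ‖M‖_n, where S_λ(Y) = UD_λV' with Y = UDV' the SVD and D_λ the diagonal matrix with entries max(D_{ii} − λ, 0). -/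
open Matrix BigOperators

section aux
variable {N T : ℕ}
open scoped MatrixOrder
lemma psd_tmul (A : Matrix (Fin N) (Fin T) ℝ) : Matrix.PosSemidef (Aᵀ * A) := by
  simpa [Matrix.conjTranspose_eq_transpose_of_trivial] using
    Matrix.posSemidef_conjTranspose_mul_self A
lemma trace_psd_sqrt {n : ℕ} {P : Matrix (Fin n) (Fin n) ℝ} (hP : P.PosSemidef) :
    (CFC.sqrt P).trace = ∑ j, Real.sqrt (hP.1.eigenvalues j) := by
  rw [CFC.sqrt_eq_cfc, cfc_nnreal_eq_real _ P hP.nonneg, hP.1.cfc_eq, Matrix.IsHermitian.cfc,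
    Unitary.conjStarAlgAut_apply, Matrix.trace_mul_cycle,
    (Matrix.mem_unitaryGroup_iff').mp (Matrix.IsHermitian.eigenvectorUnitary hP.1).2, one_mul,
    Matrix.trace_diagonal]
  simp [Real.coe_sqrt, Real.coe_toNNReal', hP.eigenvalues_nonneg]
lemma nuclearNorm_eq_trace (A : Matrix (Fin N) (Fin T) ℝ) :
    nuclearNorm A = (CFC.sqrt (Aᵀ * A)).trace := by
  rw [trace_psd_sqrt (psd_tmul A)]; rfl

lemma nuclearNorm_conj (A : Matrix (Fin N) (Fin T) ℝ)
    (Q : Matrix (Fin N) (Fin N) ℝ) (P : Matrix (Fin T) (Fin T) ℝ)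
    (hQ : Qᵀ * Q = 1) (hP : Pᵀ * P = 1) (hP' : P * Pᵀ = 1) :
    nuclearNorm (Q * A * Pᵀ) = nuclearNorm A := by
  have h1 : (Q * A * Pᵀ)ᵀ * (Q * A * Pᵀ) = P * (Aᵀ * A) * Pᵀ := by
    simp only [Matrix.transpose_mul, Matrix.transpose_transpose]
    calc P * (Aᵀ * Qᵀ) * (Q * A * Pᵀ) = P * (Aᵀ * ((Qᵀ * Q) * A)) * Pᵀ := by
          simp only [Matrix.mul_assoc]
      _ = P * (Aᵀ * A) * Pᵀ := by rw [hQ, Matrix.one_mul]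
  have hS := (CFC.sqrt_nonneg (Aᵀ * A)).posSemidef
  have hconj : Matrix.PosSemidef (P * CFC.sqrt (Aᵀ * A) * Pᵀ) := by
    simpa [Matrix.conjTranspose_eq_transpose_of_trivial] using
      hS.mul_mul_conjTranspose_same P
  have hsq : (P * CFC.sqrt (Aᵀ * A) * Pᵀ) ^ 2 = (Q * A * Pᵀ)ᵀ * (Q * A * Pᵀ) := by
    rw [h1, pow_two]
    calc P * CFC.sqrt (Aᵀ * A) * Pᵀ * (P * CFC.sqrt (Aᵀ * A) * Pᵀ)
        = P * (CFC.sqrt (Aᵀ * A) * ((Pᵀ * P) * CFC.sqrt (Aᵀ * A))) * Pᵀ := by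
          simp only [Matrix.mul_assoc]
      _ = P * (Aᵀ * A) * Pᵀ := by
          rw [hP, Matrix.one_mul, CFC.sqrt_mul_sqrt_self _ (psd_tmul A).nonneg]
  have heq := (CFC.sqrt_unique (a := (Q * A * Pᵀ)ᵀ * (Q * A * Pᵀ)) (by rw [← pow_two]; exact hsq) hconj.nonneg).symm
  rw [nuclearNorm_eq_trace, nuclearNorm_eq_trace, ← heq, Matrix.trace_mul_cycle, hP, Matrix.one_mul]

lemma nuclearNorm_of_diag (A : Matrix (Fin N) (Fin T) ℝ) (g : Fin T → ℝ) (hg : ∀ j, 0 ≤ g j)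
    (h : Aᵀ * A = Matrix.diagonal (fun j => g j ^ 2)) : nuclearNorm A = ∑ j, g j := by
  have hd : Matrix.PosSemidef (Matrix.diagonal g) := Matrix.posSemidef_diagonal_iff.mpr hg
  have hsq : (Matrix.diagonal g) ^ 2 = Aᵀ * A := by
    rw [h, pow_two, Matrix.diagonal_mul_diagonal]
    exact congrArg Matrix.diagonal (funext fun j => (pow_two (g j)).symm)
  have := (CFC.sqrt_unique (a := Aᵀ * A) (by rw [← pow_two]; exact hsq) hd.nonneg).symm
  rw [nuclearNorm_eq_trace, ← this, Matrix.trace_diagonal]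
end aux

section aux2
variable {N T : ℕ}

lemma sum_ite_diag (f : Fin N → ℝ) (t : ℕ) :
    ∑ i : Fin N, (if (i : ℕ) = t then f i else 0) = if h : t < N then f ⟨t, h⟩ else 0 := by
  by_cases h : t < N
  · rw [dif_pos h, Finset.sum_eq_single ⟨t, h⟩]
    · simp
    · intro i _ hne
      rw [if_neg]
      intro hc
      exact hne (Fin.ext hc)
    · intro hc; exact absurd (Finset.mem_univ _) hc
  · rw [dif_neg h]
    apply Finset.sum_eq_zero
    intro i _
    rw [if_neg]
    intro hc
    exact h (hc ▸ i.isLt)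

lemma sum_dite_le (f : Fin N → ℝ) (hf : ∀ i, 0 ≤ f i) :
    ∑ j : Fin T, (if h : (j : ℕ) < N then f ⟨j, h⟩ else 0) ≤ ∑ i, f i := by
  set G : ℕ → ℝ := fun t => if h : t < N then f ⟨t, h⟩ else 0 with hGdef
  have h1 : ∑ j : Fin T, (if h : (j : ℕ) < N then f ⟨j, h⟩ else 0) = ∑ t ∈ Finset.range T, G t := by
    rw [← Fin.sum_univ_eq_sum_range]
  have h2 : ∑ i, f i = ∑ t ∈ Finset.range N, G t := by
    rw [← Fin.sum_univ_eq_sum_range]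
    apply Finset.sum_congr rfl
    intro i _
    simp [hGdef, i.isLt]
  rw [h1, h2]
  rcases le_total T N with h | h
  · apply Finset.sum_le_sum_of_subset_of_nonneg (Finset.range_subset_range.mpr h)
    intro t _ _
    by_cases ht : t < N
    · simpa [hGdef, ht] using hf _
    · simp [hGdef, ht]
  · rw [Finset.sum_subset (Finset.range_subset_range.mpr h)]
    intro t _ ht
    have : ¬ t < N := by simpa using ht
    simp [hGdef, this]

lemma sum_diag_abs_le (A : Matrix (Fin N) (Fin T) ℝ) :
    ∑ j : Fin T, (if h : (j : ℕ) < N then |A ⟨j, h⟩ j| else 0) ≤ nuclearNorm A := by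
  set hH := Matrix.isHermitian_conjTranspose_mul_self A with hHdef
  set W : Matrix (Fin T) (Fin T) ℝ := (Matrix.IsHermitian.eigenvectorUnitary hH : Matrix (Fin T) (Fin T) ℝ) with hWdef
  set e : Fin T → ℝ := hH.eigenvalues with hedef
  have hW1 : star W * W = 1 := (Matrix.mem_unitaryGroup_iff').mp (Matrix.IsHermitian.eigenvectorUnitary hH).2
  have hW2 : W * star W = 1 := (Matrix.mem_unitaryGroup_iff).mp (Matrix.IsHermitian.eigenvectorUnitary hH).2
  have hstar : star W = Wᵀ := by
    rw [Matrix.star_eq_conjTranspose, Matrix.conjTranspose_eq_transpose_of_trivial]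
  rw [hstar] at hW1 hW2
  have hspec : Aᵀ * A = W * Matrix.diagonal e * Wᵀ := by
    have := hH.spectral_theorem
    rw [Unitary.conjStarAlgAut_apply, hstar] at this
    exact this
  set B := A * W with hBdef
  have hABW : ∀ (i : Fin N) (j : Fin T), A i j = ∑ k, B i k * W j k := by
    intro i j
    have : A = B * Wᵀ := by rw [hBdef, Matrix.mul_assoc, hW2, Matrix.mul_one]
    conv_lhs => rw [this]
    rw [Matrix.mul_apply]
    simp [Matrix.transpose_apply]
  have hcol : ∀ k, ∑ i, (B i k) ^ 2 = e k := by
    intro k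
    have hBB : Bᵀ * B = Matrix.diagonal e := by
      rw [hBdef, Matrix.transpose_mul, Matrix.mul_assoc, ← Matrix.mul_assoc Aᵀ, hspec]
      calc Wᵀ * (W * Matrix.diagonal e * Wᵀ * W)
          = (Wᵀ * W) * Matrix.diagonal e * (Wᵀ * W) := by simp only [Matrix.mul_assoc]
        _ = Matrix.diagonal e := by rw [hW1, Matrix.one_mul, Matrix.mul_one]
    have := congrFun (congrFun hBB k) k
    rw [Matrix.mul_apply] at this
    simp only [Matrix.transpose_apply, Matrix.diagonal_apply_eq] at this
    rw [← this]
    apply Finset.sum_congr rfl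
    intro i _
    rw [pow_two]
  have hWcol : ∀ k, ∑ j, (W j k) ^ 2 = 1 := by
    intro k
    have := congrFun (congrFun hW1 k) k
    rw [Matrix.mul_apply] at this
    simp only [Matrix.transpose_apply, Matrix.one_apply_eq] at this
    rw [← this]
    apply Finset.sum_congr rfl
    intro j _
    rw [pow_two]
  have he : ∀ k, 0 ≤ e k := fun k => (psd_tmul A).eigenvalues_nonneg k
  have step1 : ∀ j : Fin T, (if h : (j : ℕ) < N then |A ⟨j, h⟩ j| else 0)
      ≤ ∑ k, (if h : (j : ℕ) < N then |B ⟨j, h⟩ k| else 0) * |W j k| := by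
    intro j
    by_cases h : (j : ℕ) < N
    · simp only [dif_pos h]
      rw [hABW ⟨j, h⟩ j]
      refine (Finset.abs_sum_le_sum_abs _ _).trans (le_of_eq ?_)
      apply Finset.sum_congr rfl
      intro k _
      rw [abs_mul]
    · simp [dif_neg h]
  calc ∑ j : Fin T, (if h : (j : ℕ) < N then |A ⟨j, h⟩ j| else 0)
      ≤ ∑ j : Fin T, ∑ k, (if h : (j : ℕ) < N then |B ⟨j, h⟩ k| else 0) * |W j k| :=
        Finset.sum_le_sum (fun j _ => step1 j)
    _ = ∑ k, ∑ j : Fin T, (if h : (j : ℕ) < N then |B ⟨j, h⟩ k| else 0) * |W j k| :=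
        Finset.sum_comm
    _ ≤ ∑ k, Real.sqrt (e k) := by
        apply Finset.sum_le_sum
        intro k _
        have hnn : 0 ≤ ∑ j : Fin T, (if h : (j : ℕ) < N then |B ⟨j, h⟩ k| else 0) * |W j k| := by
          apply Finset.sum_nonneg
          intro j _
          apply mul_nonneg _ (abs_nonneg _)
          by_cases h : (j : ℕ) < N
          · simp [dif_pos h]
          · simp [dif_neg h]
        have ha2 : ∑ j : Fin T, (if h : (j : ℕ) < N then |B ⟨j, h⟩ k| else 0) ^ 2 ≤ e k := by
          rw [← hcol k]
          refine le_trans (le_of_eq (Finset.sum_congr rfl fun j _ => ?_))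
            (sum_dite_le (fun i => (B i k) ^ 2) (fun i => sq_nonneg _))
          by_cases h : (j : ℕ) < N
          · simp [dif_pos h, sq_abs]
          · simp [dif_neg h]
        have hw2 : ∑ j : Fin T, |W j k| ^ 2 = 1 := by
          rw [← hWcol k]
          exact Finset.sum_congr rfl fun j _ => sq_abs _
        calc ∑ j : Fin T, (if h : (j : ℕ) < N then |B ⟨j, h⟩ k| else 0) * |W j k|
            ≤ Real.sqrt (∑ j : Fin T, (if h : (j : ℕ) < N then |B ⟨j, h⟩ k| else 0) ^ 2) *
              Real.sqrt (∑ j : Fin T, |W j k| ^ 2) := Real.sum_mul_le_sqrt_mul_sqrt _ _ _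
          _ ≤ Real.sqrt (e k) := by
              rw [hw2, Real.sqrt_one, mul_one]
              exact Real.sqrt_le_sqrt ha2
    _ = nuclearNorm A := rfl
end aux2

section aux3
variable {N T : ℕ}

lemma frobSq_eq_trace (A : Matrix (Fin N) (Fin T) ℝ) : frobSq A = (Aᵀ * A).trace := by
  rw [frobSq, Matrix.trace]
  simp only [Matrix.diag_apply, Matrix.mul_apply, Matrix.transpose_apply]
  rw [Finset.sum_comm]
  exact Finset.sum_congr rfl fun i _ => Finset.sum_congr rfl fun j _ => (pow_two _)

lemma frobSq_conj (A : Matrix (Fin N) (Fin T) ℝ)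
    (Q : Matrix (Fin N) (Fin N) ℝ) (P : Matrix (Fin T) (Fin T) ℝ)
    (hQ : Qᵀ * Q = 1) (hP : Pᵀ * P = 1) :
    frobSq (Q * A * Pᵀ) = frobSq A := by
  rw [frobSq_eq_trace, frobSq_eq_trace]
  have h1 : (Q * A * Pᵀ)ᵀ * (Q * A * Pᵀ) = P * (Aᵀ * A) * Pᵀ := by
    simp only [Matrix.transpose_mul, Matrix.transpose_transpose]
    calc P * (Aᵀ * Qᵀ) * (Q * A * Pᵀ) = P * (Aᵀ * ((Qᵀ * Q) * A)) * Pᵀ := by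
          simp only [Matrix.mul_assoc]
      _ = P * (Aᵀ * A) * Pᵀ := by rw [hQ, Matrix.one_mul]
  rw [h1, Matrix.trace_mul_cycle, hP, Matrix.one_mul]

lemma scalar_ineq (d lam m : ℝ) (hd : 0 ≤ d) (hlam : 0 < lam) :
    (d - max (d - lam) 0) ^ 2 + 2 * lam * max (d - lam) 0
      ≤ (d - m) ^ 2 + 2 * lam * |m| := by
  rcases le_total (d - lam) 0 with h | h
  · rw [max_eq_right h]
    rcases abs_cases m with ⟨h1, h2⟩ | ⟨h1, h2⟩ <;> rw [h1] <;> nlinarith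
  · rw [max_eq_left h]
    have := le_abs_self m
    nlinarith [sq_nonneg (d - m - lam)]
end aux3


/-- soft singular value thresholding solves the nuclear-norm prox problem.
If `Y = U D Vᵀ` is an SVD of `Y` (with `U`, `V` orthogonal and `D` rectangular-diagonal with
nonnegative entries), then `S_λ(Y) = U D_λ Vᵀ`, where `D_λ` soft-thresholds the diagonal,
minimizes `M ↦ ‖Y − M‖_F² + 2λ‖M‖ₙ`. -/
theorem stmt9 {N T : ℕ} (Y : Matrix (Fin N) (Fin T) ℝ)
    (U : Matrix (Fin N) (Fin N) ℝ) (V : Matrix (Fin T) (Fin T) ℝ)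
    (D : Matrix (Fin N) (Fin T) ℝ) (lam : ℝ) (hlam : 0 < lam)
    (hU : Uᵀ * U = 1) (hU' : U * Uᵀ = 1) (hV : Vᵀ * V = 1) (hV' : V * Vᵀ = 1)
    (hDdiag : ∀ (i : Fin N) (j : Fin T), (i : ℕ) ≠ (j : ℕ) → D i j = 0)
    (hDpos : ∀ (i : Fin N) (j : Fin T), 0 ≤ D i j)
    (hY : Y = U * D * Vᵀ) :
    ∀ M : Matrix (Fin N) (Fin T) ℝ,
      frobSq (Y - U * (Matrix.of fun (i : Fin N) (j : Fin T) =>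
            if (i : ℕ) = (j : ℕ) then max (D i j - lam) 0 else 0) * Vᵀ)
          + 2 * lam * nuclearNorm (U * (Matrix.of fun (i : Fin N) (j : Fin T) =>
            if (i : ℕ) = (j : ℕ) then max (D i j - lam) 0 else 0) * Vᵀ)
        ≤ frobSq (Y - M) + 2 * lam * nuclearNorm M := by
  intro M
  set Dl : Matrix (Fin N) (Fin T) ℝ := Matrix.of fun (i : Fin N) (j : Fin T) =>
    if (i : ℕ) = (j : ℕ) then max (D i j - lam) 0 else 0 with hDl
  set N' : Matrix (Fin N) (Fin T) ℝ := Uᵀ * M * V with hN'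
  have hM : M = U * N' * Vᵀ := by
    rw [hN']
    calc M = (U * Uᵀ) * M * (V * Vᵀ) := by rw [hU', hV', Matrix.one_mul, Matrix.mul_one]
      _ = U * (Uᵀ * M * V) * Vᵀ := by simp only [Matrix.mul_assoc]
  have hsub : ∀ X : Matrix (Fin N) (Fin T) ℝ, Y - U * X * Vᵀ = U * (D - X) * Vᵀ := by
    intro X
    rw [hY, ← Matrix.sub_mul, ← Matrix.mul_sub]
  rw [hsub Dl, hM, hsub N', frobSq_conj _ U V hU hV, frobSq_conj _ U V hU hV,
    nuclearNorm_conj _ U V hU hV hV', nuclearNorm_conj _ U V hU hV hV']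
  -- now goal: frobSq (D - Dl) + 2λ‖Dl‖ₙ ≤ frobSq (D - N') + 2λ‖N'‖ₙ
  set g : Fin T → ℝ := fun j => if h : (j : ℕ) < N then max (D ⟨j, h⟩ j - lam) 0 else 0 with hg
  have hgnn : ∀ j, 0 ≤ g j := by
    intro j
    by_cases h : (j : ℕ) < N
    · simp only [hg, dif_pos h]; exact le_max_right _ _
    · simp [hg, dif_neg h]
  have hA : nuclearNorm Dl = ∑ j, g j := by
    apply nuclearNorm_of_diag Dl g hgnn
    ext j k
    rw [Matrix.mul_apply]
    simp only [Matrix.transpose_apply, Matrix.of_apply, hDl]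
    by_cases hjk : j = k
    · subst hjk
      rw [Matrix.diagonal_apply_eq]
      have : ∀ i : Fin N,
          (if (i : ℕ) = (j : ℕ) then max (D i j - lam) 0 else 0) *
            (if (i : ℕ) = (j : ℕ) then max (D i j - lam) 0 else 0)
          = if (i : ℕ) = (j : ℕ) then (max (D i j - lam) 0) ^ 2 else 0 := by
        intro i
        by_cases h : (i : ℕ) = (j : ℕ) <;> simp [h, pow_two]
      rw [Finset.sum_congr rfl fun i _ => this i,
        sum_ite_diag (fun i => (max (D i j - lam) 0) ^ 2) (j : ℕ)]
      by_cases h : (j : ℕ) < N <;> simp [hg, h]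
    · rw [Matrix.diagonal_apply_ne _ hjk]
      apply Finset.sum_eq_zero
      intro i _
      by_cases h1 : (i : ℕ) = (j : ℕ)
      · by_cases h2 : (i : ℕ) = (k : ℕ)
        · exact absurd (Fin.ext (h1 ▸ h2 : (j : ℕ) = (k : ℕ))) hjk
        · simp [h2]
      · simp [h1]
  have hB : frobSq (D - Dl) =
      ∑ j : Fin T, (if h : (j : ℕ) < N then
        (D ⟨j, h⟩ j - max (D ⟨j, h⟩ j - lam) 0) ^ 2 else 0) := by
    rw [frobSq, Finset.sum_comm]
    apply Finset.sum_congr rfl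
    intro j _
    have : ∀ i : Fin N, (D - Dl) i j ^ 2 =
        if (i : ℕ) = (j : ℕ) then (D i j - max (D i j - lam) 0) ^ 2 else 0 := by
      intro i
      by_cases h : (i : ℕ) = (j : ℕ)
      · simp [Matrix.sub_apply, hDl, h]
      · simp [Matrix.sub_apply, hDl, h, hDdiag i j h]
    rw [Finset.sum_congr rfl fun i _ => this i,
      sum_ite_diag (fun i => (D i j - max (D i j - lam) 0) ^ 2) (j : ℕ)]
  have hC : ∑ j : Fin T, (if h : (j : ℕ) < N then (D ⟨j, h⟩ j - N' ⟨j, h⟩ j) ^ 2 else 0)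
      ≤ frobSq (D - N') := by
    rw [frobSq, Finset.sum_comm]
    apply Finset.sum_le_sum
    intro j _
    have key : ∀ i : Fin N,
        (if (i : ℕ) = (j : ℕ) then (D i j - N' i j) ^ 2 else 0) ≤ (D - N') i j ^ 2 := by
      intro i
      by_cases h : (i : ℕ) = (j : ℕ)
      · simp [Matrix.sub_apply, h]
      · simp only [if_neg h]
        exact sq_nonneg _
    calc (if h : (j : ℕ) < N then (D ⟨j, h⟩ j - N' ⟨j, h⟩ j) ^ 2 else 0)
        = ∑ i : Fin N, (if (i : ℕ) = (j : ℕ) then (D i j - N' i j) ^ 2 else 0) :=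
          (sum_ite_diag (fun i => (D i j - N' i j) ^ 2) (j : ℕ)).symm
      _ ≤ ∑ i : Fin N, (D - N') i j ^ 2 := Finset.sum_le_sum fun i _ => key i
  have hD' : ∑ j : Fin T, (if h : (j : ℕ) < N then |N' ⟨j, h⟩ j| else 0) ≤ nuclearNorm N' :=
    sum_diag_abs_le N'
  have hmid : frobSq (D - Dl) + 2 * lam * nuclearNorm Dl
      ≤ (∑ j : Fin T, (if h : (j : ℕ) < N then (D ⟨j, h⟩ j - N' ⟨j, h⟩ j) ^ 2 else 0))
        + 2 * lam * (∑ j : Fin T, (if h : (j : ℕ) < N then |N' ⟨j, h⟩ j| else 0)) := by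
    rw [hA, hB, Finset.mul_sum, Finset.mul_sum, ← Finset.sum_add_distrib,
      ← Finset.sum_add_distrib]
    apply Finset.sum_le_sum
    intro j _
    by_cases h : (j : ℕ) < N
    · simp only [dif_pos h, hg]
      exact scalar_ineq (D ⟨j, h⟩ j) lam (N' ⟨j, h⟩ j) (hDpos _ _) hlam
    · simp [hg, dif_neg h]
  refine hmid.trans (add_le_add hC ?_)
  exact mul_le_mul_of_nonneg_left hD' (by linarith)
end

section
/- Basic inequality for penalized regression: suppose 2‖U‖_op < (1−c)ν₂ and 2‖X⊙U‖_op < (1−c)ν₁ for some c > 0, where Y = M⁰ + X⊙Θ⁰ + U. If (M̃, Θ̃) minimizes F(Θ, M) = ‖Y − M − X⊙Θ‖_F² + ν₂‖M‖_n + ν₁‖Θ‖_n, then with Δ₁ = M̃ − M⁰ and Δ₂ = Θ̃ − Θ⁰, one has ‖Δ₁ + X⊙Δ₂‖_F² + cν₂‖𝓟₁(Δ₁)‖_n + cν₁‖𝓟₂(Δ₂)‖_n ≤ (2−c)ν₂‖𝓜₁(Δ₁)‖_n + (2−c)ν₁‖𝓜₂(Δ₂)‖_n. -/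
open Matrix BigOperators

namespace Stmt11
variable {m n : ℕ}

noncomputable def eigL (A : Matrix (Fin m) (Fin n) ℝ) : Fin n → ℝ :=
  (Matrix.isHermitian_conjTranspose_mul_self A).eigenvalues

noncomputable def eigU (A : Matrix (Fin m) (Fin n) ℝ) : Matrix (Fin n) (Fin n) ℝ :=
  ((Matrix.isHermitian_conjTranspose_mul_self A).eigenvectorUnitary : Matrix (Fin n) (Fin n) ℝ)

lemma singVals_eq (A : Matrix (Fin m) (Fin n) ℝ) (j : Fin n) :
    singVals A j = Real.sqrt (eigL A j) := rfl

lemma eigL_nonneg (A : Matrix (Fin m) (Fin n) ℝ) (j : Fin n) : 0 ≤ eigL A j :=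
  (Matrix.posSemidef_conjTranspose_mul_self A).eigenvalues_nonneg j

lemma sv_nonneg (A : Matrix (Fin m) (Fin n) ℝ) (j : Fin n) : 0 ≤ singVals A j :=
  Real.sqrt_nonneg _

lemma sv_sq (A : Matrix (Fin m) (Fin n) ℝ) (j : Fin n) : singVals A j ^ 2 = eigL A j := by
  rw [singVals_eq, Real.sq_sqrt (eigL_nonneg A j)]

lemma nn_nonneg (A : Matrix (Fin m) (Fin n) ℝ) : 0 ≤ nuclearNorm A :=
  Finset.sum_nonneg fun j _ => sv_nonneg A j

lemma op_nonneg (A : Matrix (Fin m) (Fin n) ℝ) : 0 ≤ opNorm A :=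
  Real.iSup_nonneg (sv_nonneg A)

lemma sv_le_op (A : Matrix (Fin m) (Fin n) ℝ) (j : Fin n) : singVals A j ≤ opNorm A :=
  le_ciSup (Set.Finite.bddAbove (Set.finite_range _)) j

lemma eigU_star_mul_self (A : Matrix (Fin m) (Fin n) ℝ) : (eigU A)ᴴ * eigU A = 1 := by
  simpa [eigU, Matrix.star_eq_conjTranspose] using
    Unitary.coe_star_mul_self ((Matrix.isHermitian_conjTranspose_mul_self A).eigenvectorUnitary)

lemma eigU_mul_self_star (A : Matrix (Fin m) (Fin n) ℝ) : eigU A * (eigU A)ᴴ = 1 := by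
  simpa [eigU, Matrix.star_eq_conjTranspose] using
    Unitary.coe_mul_star_self ((Matrix.isHermitian_conjTranspose_mul_self A).eigenvectorUnitary)

lemma spec (A : Matrix (Fin m) (Fin n) ℝ) :
    Aᴴ * A = eigU A * diagonal (eigL A) * (eigU A)ᴴ := by
  simpa [eigU, eigL, Matrix.star_eq_conjTranspose] using
    (Matrix.isHermitian_conjTranspose_mul_self A).spectral_theorem

noncomputable def conjD (A : Matrix (Fin m) (Fin n) ℝ) (f : Fin n → ℝ) :
    Matrix (Fin n) (Fin n) ℝ :=
  eigU A * diagonal f * (eigU A)ᴴ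

lemma conjD_mul (A : Matrix (Fin m) (Fin n) ℝ) (f g : Fin n → ℝ) :
    conjD A f * conjD A g = conjD A (fun j => f j * g j) := by
  simp only [conjD, Matrix.mul_assoc]
  rw [← Matrix.mul_assoc ((eigU A)ᴴ) (eigU A), eigU_star_mul_self, Matrix.one_mul,
    ← Matrix.mul_assoc (diagonal f), Matrix.diagonal_mul_diagonal]

lemma conjD_herm (A : Matrix (Fin m) (Fin n) ℝ) (f : Fin n → ℝ) :
    (conjD A f)ᴴ = conjD A f := by
  simp only [conjD, Matrix.conjTranspose_mul, Matrix.conjTranspose_conjTranspose,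
    Matrix.diagonal_conjTranspose]
  rw [Matrix.mul_assoc]
  have : star f = f := funext fun j => star_trivial (f j)
  rw [this]

lemma trace_conjD (A : Matrix (Fin m) (Fin n) ℝ) (f : Fin n → ℝ) :
    Matrix.trace (conjD A f) = ∑ j, f j := by
  rw [conjD, Matrix.trace_mul_cycle, eigU_star_mul_self, Matrix.one_mul,
    Matrix.trace_diagonal]

end Stmt11

namespace Stmt11
variable {m n : ℕ}

lemma inv_mul_sq (x : ℝ) : x⁻¹ * x ^ 2 = x := by
  rcases eq_or_ne x 0 with h | h
  · simp [h]
  · field_simp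

noncomputable def dualW (A : Matrix (Fin m) (Fin n) ℝ) : Matrix (Fin n) (Fin n) ℝ :=
  conjD A (fun j => (singVals A j)⁻¹)

noncomputable def eFun (A : Matrix (Fin m) (Fin n) ℝ) : Fin n → ℝ :=
  fun j => singVals A j * (singVals A j)⁻¹

lemma eFun_idem (A : Matrix (Fin m) (Fin n) ℝ) (j : Fin n) :
    eFun A j * eFun A j = eFun A j := by
  rcases eq_or_ne (singVals A j) 0 with h | h <;> simp [eFun, h]

lemma specD (A : Matrix (Fin m) (Fin n) ℝ) : Aᴴ * A = conjD A (eigL A) := spec A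

lemma WH (A : Matrix (Fin m) (Fin n) ℝ) :
    dualW A * (Aᴴ * A) = conjD A (singVals A) := by
  have hf : (fun j => (singVals A j)⁻¹ * eigL A j) = singVals A := by
    funext j; rw [← sv_sq, inv_mul_sq]
  rw [specD, dualW, conjD_mul, hf]

lemma HW2 (A : Matrix (Fin m) (Fin n) ℝ) :
    (Aᴴ * A) * (dualW A * dualW A) = conjD A (eFun A) := by
  have hf : (fun j => eigL A j * ((singVals A j)⁻¹ * (singVals A j)⁻¹)) = eFun A := by
    funext j; rw [← sv_sq]
    rcases eq_or_ne (singVals A j) 0 with h | h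
    · simp [eFun, h]
    · field_simp [eFun, h]; simp [eFun, h]
  rw [specD, dualW, conjD_mul, conjD_mul, hf]

lemma W2H (A : Matrix (Fin m) (Fin n) ℝ) :
    (dualW A * dualW A) * (Aᴴ * A) = conjD A (eFun A) := by
  have hf : (fun j => (singVals A j)⁻¹ * (singVals A j)⁻¹ * eigL A j) = eFun A := by
    funext j; rw [← sv_sq]
    rcases eq_or_ne (singVals A j) 0 with h | h
    · simp [eFun, h]
    · field_simp [eFun, h]; simp [eFun, h]
  rw [specD, dualW, conjD_mul, conjD_mul, hf]

lemma dualW_herm (A : Matrix (Fin m) (Fin n) ℝ) : (dualW A)ᴴ = dualW A := conjD_herm A _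

lemma XtX (A : Matrix (Fin m) (Fin n) ℝ) :
    (A * dualW A)ᴴ * (A * dualW A) = conjD A (eFun A) := by
  rw [Matrix.conjTranspose_mul, dualW_herm, Matrix.mul_assoc, ← Matrix.mul_assoc Aᴴ,
    ← Matrix.mul_assoc (dualW A), WH, dualW, conjD_mul]
  rfl

lemma traceXA (A : Matrix (Fin m) (Fin n) ℝ) :
    Matrix.trace ((A * dualW A)ᴴ * A) = nuclearNorm A := by
  rw [Matrix.conjTranspose_mul, dualW_herm, Matrix.mul_assoc, WH, trace_conjD]
  rfl

lemma eig_le_one {k : ℕ} {H : Matrix (Fin k) (Fin k) ℝ} (hH : H.IsHermitian)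
    (hidem : H * H = H) (j : Fin k) : hH.eigenvalues j ≤ 1 := by
  have hv := hH.mulVec_eigenvectorBasis j
  set lam := hH.eigenvalues j with hlam
  set v : Fin k → ℝ := ⇑(hH.eigenvectorBasis j) with hvdef
  have h2 : (H * H) *ᵥ v = (lam * lam) • v := by
    rw [← Matrix.mulVec_mulVec, hv, Matrix.mulVec_smul, hv, smul_smul]
  rw [hidem, hv] at h2
  have hvne : v ≠ 0 := by
    intro h0
    apply hH.eigenvectorBasis.orthonormal.ne_zero j
    ext i
    exact congrFun h0 i
  have h3 : (lam - lam * lam) • v = 0 := by rw [sub_smul, h2, sub_self]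
  rcases smul_eq_zero.mp h3 with h4 | h4
  · nlinarith [sub_eq_zero.mp (by linarith [h4] : lam - lam * lam = 0)]
  · exact absurd h4 hvne

lemma op_le_one {B : Matrix (Fin m) (Fin n) ℝ}
    (h : (Bᴴ * B) * (Bᴴ * B) = Bᴴ * B) : opNorm B ≤ 1 := by
  apply Real.iSup_le _ zero_le_one
  intro j
  rw [singVals_eq, show (1:ℝ) = Real.sqrt 1 from Real.sqrt_one.symm]
  exact Real.sqrt_le_sqrt (eig_le_one _ h j)

lemma opX_le_one (A : Matrix (Fin m) (Fin n) ℝ) : opNorm (A * dualW A) ≤ 1 := by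
  apply op_le_one
  have hf : (fun j => eFun A j * eFun A j) = eFun A := funext fun j => eFun_idem A j
  rw [XtX, conjD_mul, hf]

end Stmt11

namespace Stmt11
variable {m n : ℕ}

lemma diag_entry_sum (X Y : Matrix (Fin m) (Fin n) ℝ) (j : Fin n) :
    (Xᴴ * Y) j j = ∑ i, X i j * Y i j := by
  simp [Matrix.mul_apply, Matrix.conjTranspose_apply]

lemma conj_by_iso (A B : Matrix (Fin m) (Fin n) ℝ) (V : Matrix (Fin n) (Fin n) ℝ) :
    (A * V)ᴴ * (B * V) = Vᴴ * ((Aᴴ * B) * V) := by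
  rw [Matrix.conjTranspose_mul]
  simp only [Matrix.mul_assoc]

lemma quad_bound (B : Matrix (Fin m) (Fin n) ℝ) (V : Matrix (Fin n) (Fin n) ℝ)
    (hV : Vᴴ * V = 1) (j : Fin n) : ∑ i, (B * V) i j ^ 2 ≤ opNorm B ^ 2 := by
  set C : Matrix (Fin n) (Fin n) ℝ := (eigU B)ᴴ * V with hCdef
  have hC : Cᴴ * C = 1 := by
    rw [hCdef, Matrix.conjTranspose_mul, Matrix.conjTranspose_conjTranspose,
      Matrix.mul_assoc, ← Matrix.mul_assoc (eigU B), eigU_mul_self_star,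
      Matrix.one_mul, hV]
  have key : (B * V)ᴴ * (B * V) = Cᴴ * (diagonal (eigL B) * C) := by
    rw [conj_by_iso, specD B, hCdef]
    simp only [conjD, Matrix.conjTranspose_mul, Matrix.conjTranspose_conjTranspose,
      Matrix.mul_assoc]
  have l1 : ∑ i, (B * V) i j ^ 2 = ∑ k, eigL B k * C k j ^ 2 := by
    have := congrFun (congrFun key j) j
    rw [diag_entry_sum] at this
    simp only [pow_two] at this ⊢
    rw [this]
    simp [Matrix.mul_apply, Matrix.diagonal, Matrix.conjTranspose_apply,
      Finset.mul_sum]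
    apply Finset.sum_congr rfl
    intro k _
    ring
  rw [l1]
  have l2 : ∑ k, C k j ^ 2 = 1 := by
    have := congrFun (congrFun hC j) j
    rw [diag_entry_sum] at this
    simp only [pow_two]
    rw [this, Matrix.one_apply_eq]
  calc ∑ k, eigL B k * C k j ^ 2 ≤ ∑ k, opNorm B ^ 2 * C k j ^ 2 := by
        apply Finset.sum_le_sum
        intro k _
        apply mul_le_mul_of_nonneg_right _ (sq_nonneg _)
        rw [← sv_sq]
        exact pow_le_pow_left₀ (sv_nonneg B k) (sv_le_op B k) 2
    _ = opNorm B ^ 2 := by rw [← Finset.mul_sum, l2, mul_one]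

lemma trace_duality (A B : Matrix (Fin m) (Fin n) ℝ) :
    Matrix.trace (Aᴴ * B) ≤ nuclearNorm A * opNorm B := by
  set V : Matrix (Fin n) (Fin n) ℝ := eigU A with hVdef
  have htr : Matrix.trace (Aᴴ * B) = ∑ j, ∑ i, (A * V) i j * (B * V) i j := by
    have h2 : Matrix.trace ((A * V)ᴴ * (B * V)) = Matrix.trace (Aᴴ * B) := by
      rw [conj_by_iso, Matrix.trace_mul_comm, Matrix.mul_assoc, hVdef,
        eigU_mul_self_star, Matrix.mul_one]
    rw [← h2]
    rw [Matrix.trace]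
    apply Finset.sum_congr rfl
    intro j _
    exact diag_entry_sum _ _ j
  have hAj : ∀ j, ∑ i, (A * V) i j ^ 2 = eigL A j := by
    intro j
    have key : (A * V)ᴴ * (A * V) = diagonal (eigL A) := by
      rw [conj_by_iso, specD A, hVdef]
      simp only [conjD, Matrix.mul_assoc]
      rw [← Matrix.mul_assoc (eigU A)ᴴ (eigU A), eigU_star_mul_self, Matrix.one_mul,
        Matrix.mul_one]
    have := congrFun (congrFun key j) j
    rw [diag_entry_sum] at this
    simp only [pow_two]
    rw [this, Matrix.diagonal_apply_eq]
  rw [htr]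
  have hj : ∀ j, ∑ i, (A * V) i j * (B * V) i j ≤ singVals A j * opNorm B := by
    intro j
    have cs := Finset.sum_mul_sq_le_sq_mul_sq Finset.univ (fun i => (A * V) i j)
      (fun i => (B * V) i j)
    have h1 : ∑ i, (A * V) i j * (B * V) i j ≤
        Real.sqrt (∑ i, (A * V) i j ^ 2) * Real.sqrt (∑ i, (B * V) i j ^ 2) := by
      rw [← Real.sqrt_mul (Finset.sum_nonneg fun i _ => sq_nonneg _)]
      calc ∑ i, (A * V) i j * (B * V) i j
          ≤ |∑ i, (A * V) i j * (B * V) i j| := le_abs_self _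
        _ ≤ Real.sqrt ((∑ i, (A * V) i j ^ 2) * ∑ i, (B * V) i j ^ 2) := by
            rw [← Real.sqrt_sq_eq_abs]
            exact Real.sqrt_le_sqrt cs
    calc ∑ i, (A * V) i j * (B * V) i j
        ≤ Real.sqrt (∑ i, (A * V) i j ^ 2) * Real.sqrt (∑ i, (B * V) i j ^ 2) := h1
      _ ≤ singVals A j * opNorm B := by
          apply mul_le_mul
          · rw [hAj j, ← singVals_eq]
          · calc Real.sqrt (∑ i, (B * V) i j ^ 2)
                ≤ Real.sqrt (opNorm B ^ 2) :=
                  Real.sqrt_le_sqrt (quad_bound B V (eigU_star_mul_self A) j)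
              _ = opNorm B := by
                  rw [Real.sqrt_sq (op_nonneg B)]
          · exact Real.sqrt_nonneg _
          · exact sv_nonneg A j
  calc ∑ j, ∑ i, (A * V) i j * (B * V) i j ≤ ∑ j, singVals A j * opNorm B :=
        Finset.sum_le_sum fun j _ => hj j
    _ = nuclearNorm A * opNorm B := by rw [← Finset.sum_mul]; rfl

end Stmt11

namespace Stmt11
variable {m n : ℕ}

lemma trace_flip (X A : Matrix (Fin m) (Fin n) ℝ) :
    Matrix.trace (Xᴴ * A) = Matrix.trace (Aᴴ * X) := by
  have h : (Xᴴ * A)ᵀ = Aᴴ * X := by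
    rw [Matrix.transpose_mul, conjTranspose_eq_transpose_of_trivial,
      Matrix.transpose_transpose, conjTranspose_eq_transpose_of_trivial]
  rw [← Matrix.trace_transpose (Xᴴ * A), h]

lemma nn_triangle (A B : Matrix (Fin m) (Fin n) ℝ) :
    nuclearNorm (A + B) ≤ nuclearNorm A + nuclearNorm B := by
  have h0 := traceXA (A + B)
  set Xd := (A + B) * dualW (A + B) with hXd
  have hsplit : Matrix.trace (Xdᴴ * (A + B)) =
      Matrix.trace (Xdᴴ * A) + Matrix.trace (Xdᴴ * B) := by
    rw [Matrix.mul_add, Matrix.trace_add]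
  have key : ∀ C : Matrix (Fin m) (Fin n) ℝ, Matrix.trace (Xdᴴ * C) ≤ nuclearNorm C := by
    intro C
    rw [trace_flip]
    calc Matrix.trace (Cᴴ * Xd) ≤ nuclearNorm C * opNorm Xd := trace_duality C Xd
      _ ≤ nuclearNorm C * 1 :=
        mul_le_mul_of_nonneg_left (opX_le_one (A + B)) (nn_nonneg C)
      _ = nuclearNorm C := mul_one _
  linarith [key A, key B, h0, hsplit]

lemma eig_congr {k : ℕ} {H1 H2 : Matrix (Fin k) (Fin k) ℝ} (h : H1 = H2)
    (h1 : H1.IsHermitian) (h2 : H2.IsHermitian) : h1.eigenvalues = h2.eigenvalues := by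
  subst h; rfl

lemma sv_neg (A : Matrix (Fin m) (Fin n) ℝ) : singVals (-A) = singVals A := by
  funext j
  unfold singVals
  congr 1
  exact congrFun (eig_congr (by simp) _ _) j

lemma nn_neg (A : Matrix (Fin m) (Fin n) ℝ) : nuclearNorm (-A) = nuclearNorm A := by
  unfold nuclearNorm
  rw [sv_neg]

lemma nn_decomp (A P : Matrix (Fin m) (Fin n) ℝ) (h1 : Aᴴ * P = 0)
    (h2 : A * (Pᴴ * P) = 0) : nuclearNorm A + nuclearNorm P ≤ nuclearNorm (A + P) := by
  have h1' : Pᴴ * A = 0 := by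
    have := congrArg Matrix.conjTranspose h1
    simpa [Matrix.conjTranspose_mul] using this
  set B := A * dualW A + P * dualW P with hB
  have hBt : Bᴴ = dualW A * Aᴴ + dualW P * Pᴴ := by
    rw [hB, Matrix.conjTranspose_add, Matrix.conjTranspose_mul, Matrix.conjTranspose_mul,
      dualW_herm, dualW_herm]
  have htr : Matrix.trace (Bᴴ * (A + P)) = nuclearNorm A + nuclearNorm P := by
    have e1 : Bᴴ * (A + P) = dualW A * (Aᴴ * A) + dualW P * (Pᴴ * P)
        + (dualW A * (Aᴴ * P) + dualW P * (Pᴴ * A)) := by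
      rw [hBt]
      simp only [Matrix.add_mul, Matrix.mul_add, Matrix.mul_assoc]
      abel
    rw [e1, h1, h1', Matrix.mul_zero, Matrix.mul_zero, add_zero, add_zero,
      Matrix.trace_add, WH, WH, trace_conjD, trace_conjD]
    rfl
  have c1 : (A * dualW A)ᴴ * (P * dualW P) = 0 := by
    rw [Matrix.conjTranspose_mul, dualW_herm]
    simp only [Matrix.mul_assoc]
    rw [← Matrix.mul_assoc Aᴴ P (dualW P), h1, Matrix.zero_mul, Matrix.mul_zero]
  have c2 : (P * dualW P)ᴴ * (A * dualW A) = 0 := by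
    rw [Matrix.conjTranspose_mul, dualW_herm]
    simp only [Matrix.mul_assoc]
    rw [← Matrix.mul_assoc Pᴴ A (dualW A), h1', Matrix.zero_mul, Matrix.mul_zero]
  have hQ : Bᴴ * B = conjD A (eFun A) + conjD P (eFun P) := by
    rw [hB, Matrix.conjTranspose_add, Matrix.add_mul, Matrix.mul_add, Matrix.mul_add,
      c1, c2, XtX, XtX]
    abel
  have hfA : (fun j => eFun A j * eFun A j) = eFun A := funext (eFun_idem A)
  have hfP : (fun j => eFun P j * eFun P j) = eFun P := funext (eFun_idem P)
  have hz : conjD A (eFun A) * conjD P (eFun P) = 0 := by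
    rw [← W2H, ← HW2]
    simp only [Matrix.mul_assoc]
    rw [← Matrix.mul_assoc Pᴴ P (dualW P * dualW P),
      ← Matrix.mul_assoc A (Pᴴ * P) (dualW P * dualW P), h2, Matrix.zero_mul,
      Matrix.mul_zero, Matrix.mul_zero]
    simp
  have hz' : conjD P (eFun P) * conjD A (eFun A) = 0 := by
    have h := congrArg Matrix.conjTranspose hz
    rw [Matrix.conjTranspose_mul, conjD_herm, conjD_herm, Matrix.conjTranspose_zero] at h
    exact h
  have hidem : (Bᴴ * B) * (Bᴴ * B) = Bᴴ * B := by
    rw [hQ, Matrix.add_mul, Matrix.mul_add, Matrix.mul_add, conjD_mul, conjD_mul,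
      hz, hz', hfA, hfP]
    abel
  have hop : opNorm B ≤ 1 := op_le_one hidem
  have hd := trace_duality (A + P) B
  calc nuclearNorm A + nuclearNorm P = Matrix.trace (Bᴴ * (A + P)) := htr.symm
    _ = Matrix.trace ((A + P)ᴴ * B) := trace_flip B (A + P)
    _ ≤ nuclearNorm (A + P) * opNorm B := hd
    _ ≤ nuclearNorm (A + P) * 1 := mul_le_mul_of_nonneg_left hop (nn_nonneg _)
    _ = nuclearNorm (A + P) := mul_one _

end Stmt11

namespace Stmt11
variable {m n : ℕ}

lemma frob_expand (U D : Matrix (Fin m) (Fin n) ℝ) :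
    frobSq (U - D) = frobSq U - 2 * (∑ i, ∑ j, U i j * D i j) + frobSq D := by
  unfold frobSq
  rw [Finset.mul_sum, ← Finset.sum_sub_distrib, ← Finset.sum_add_distrib]
  apply Finset.sum_congr rfl; intro i _
  rw [Finset.mul_sum, ← Finset.sum_sub_distrib, ← Finset.sum_add_distrib]
  apply Finset.sum_congr rfl; intro j _
  simp only [Matrix.sub_apply]
  ring

lemma ip_trace (A B : Matrix (Fin m) (Fin n) ℝ) :
    ∑ i, ∑ j, A i j * B i j = Matrix.trace (Aᴴ * B) := by
  rw [Matrix.trace]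
  rw [show ∑ j, (Aᴴ * B).diag j = ∑ j, ∑ i, A i j * B i j from
    Finset.sum_congr rfl fun j _ => diag_entry_sum A B j]
  exact Finset.sum_comm

lemma ip_dual (A B : Matrix (Fin m) (Fin n) ℝ) :
    ∑ i, ∑ j, A i j * B i j ≤ nuclearNorm B * opNorm A := by
  have h : ∑ i, ∑ j, A i j * B i j = ∑ i, ∑ j, B i j * A i j := by
    apply Finset.sum_congr rfl; intro i _
    apply Finset.sum_congr rfl; intro j _
    ring
  rw [h, ip_trace]
  exact trace_duality B A

end Stmt11

set_option maxHeartbeats 1000000 in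
open Stmt11 in
/-- basic inequality for the doubly nuclear-norm penalized regression.
`Y = M⁰ + X⊙Θ⁰ + U`; `(M̃, Θ̃)` minimizes
`F(Θ, M) = ‖Y − M − X⊙Θ‖_F² + ν₂‖M‖ₙ + ν₁‖Θ‖ₙ`; the scores are dominated:
`2‖U‖_op < (1−c)ν₂` and `2‖X⊙U‖_op < (1−c)ν₁`. With `𝓟ⱼ(Δ) = U_{j,c}U_{j,c}ᵀ Δ V_{j,c}V_{j,c}ᵀ`
built from the singular vectors of `M⁰` (j = 1) and `Θ⁰` (j = 2) corresponding to zero singular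
values, and `𝓜ⱼ(Δ) = Δ − 𝓟ⱼ(Δ)`, the error matrices `Δ₁ = M̃ − M⁰`, `Δ₂ = Θ̃ − Θ⁰` satisfy the
basic inequality. -/
theorem stmt11 {N T k₁ l₁ k₂ l₂ : ℕ}
    (Y X U M0 Θ0 Mt Θt : Matrix (Fin N) (Fin T) ℝ)
    (U1c : Matrix (Fin N) (Fin k₁) ℝ) (V1c : Matrix (Fin T) (Fin l₁) ℝ)
    (U2c : Matrix (Fin N) (Fin k₂) ℝ) (V2c : Matrix (Fin T) (Fin l₂) ℝ)
    (c ν₁ ν₂ : ℝ) (hc : 0 < c) (hν₁ : 0 < ν₁) (hν₂ : 0 < ν₂)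
    (hU1c : U1cᵀ * U1c = 1) (hV1c : V1cᵀ * V1c = 1)
    (hU1M : U1cᵀ * M0 = 0) (hMV1 : M0 * V1c = 0)
    (hU2c : U2cᵀ * U2c = 1) (hV2c : V2cᵀ * V2c = 1)
    (hU2Θ : U2cᵀ * Θ0 = 0) (hΘV2 : Θ0 * V2c = 0)
    (hY : Y = M0 + X ⊙ Θ0 + U)
    (hscoreU : 2 * opNorm U < (1 - c) * ν₂)
    (hscoreXU : 2 * opNorm (X ⊙ U) < (1 - c) * ν₁)
    (hmin : ∀ M Θ : Matrix (Fin N) (Fin T) ℝ,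
      frobSq (Y - Mt - X ⊙ Θt) + ν₂ * nuclearNorm Mt + ν₁ * nuclearNorm Θt ≤
        frobSq (Y - M - X ⊙ Θ) + ν₂ * nuclearNorm M + ν₁ * nuclearNorm Θ) :
    frobSq ((Mt - M0) + X ⊙ (Θt - Θ0))
        + c * ν₂ * nuclearNorm (U1c * U1cᵀ * (Mt - M0) * (V1c * V1cᵀ))
        + c * ν₁ * nuclearNorm (U2c * U2cᵀ * (Θt - Θ0) * (V2c * V2cᵀ))
      ≤ (2 - c) * ν₂ * nuclearNorm ((Mt - M0) - U1c * U1cᵀ * (Mt - M0) * (V1c * V1cᵀ))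
        + (2 - c) * ν₁ * nuclearNorm ((Θt - Θ0) - U2c * U2cᵀ * (Θt - Θ0) * (V2c * V2cᵀ)) := by
  set Δ₁ : Matrix (Fin N) (Fin T) ℝ := Mt - M0 with hΔ₁
  set Δ₂ : Matrix (Fin N) (Fin T) ℝ := Θt - Θ0 with hΔ₂
  set P₁ : Matrix (Fin N) (Fin T) ℝ := U1c * U1cᵀ * Δ₁ * (V1c * V1cᵀ) with hP₁
  set P₂ : Matrix (Fin N) (Fin T) ℝ := U2c * U2cᵀ * Δ₂ * (V2c * V2cᵀ) with hP₂
  set D : Matrix (Fin N) (Fin T) ℝ := Δ₁ + X ⊙ Δ₂ with hD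
  -- orthogonality conditions for decomposability
  have hMU : M0ᵀ * U1c = 0 := by
    have := congrArg Matrix.transpose hU1M
    simpa [Matrix.transpose_mul] using this
  have hTU : Θ0ᵀ * U2c = 0 := by
    have := congrArg Matrix.transpose hU2Θ
    simpa [Matrix.transpose_mul] using this
  have h11 : M0ᴴ * P₁ = 0 := by
    rw [conjTranspose_eq_transpose_of_trivial, hP₁]
    simp only [Matrix.mul_assoc]
    rw [← Matrix.mul_assoc M0ᵀ U1c, hMU]
    simp only [Matrix.zero_mul, Matrix.mul_zero]
  have h12 : M0 * (P₁ᴴ * P₁) = 0 := by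
    rw [conjTranspose_eq_transpose_of_trivial, hP₁]
    simp only [Matrix.transpose_mul, Matrix.transpose_transpose, Matrix.mul_assoc]
    rw [← Matrix.mul_assoc M0 V1c, hMV1]
    simp only [Matrix.zero_mul, Matrix.mul_zero]
  have h21 : Θ0ᴴ * P₂ = 0 := by
    rw [conjTranspose_eq_transpose_of_trivial, hP₂]
    simp only [Matrix.mul_assoc]
    rw [← Matrix.mul_assoc Θ0ᵀ U2c, hTU]
    simp only [Matrix.zero_mul, Matrix.mul_zero]
  have h22 : Θ0 * (P₂ᴴ * P₂) = 0 := by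
    rw [conjTranspose_eq_transpose_of_trivial, hP₂]
    simp only [Matrix.transpose_mul, Matrix.transpose_transpose, Matrix.mul_assoc]
    rw [← Matrix.mul_assoc Θ0 V2c, hΘV2]
    simp only [Matrix.zero_mul, Matrix.mul_zero]
  have hdec1 : nuclearNorm M0 + nuclearNorm P₁ ≤ nuclearNorm (M0 + P₁) :=
    nn_decomp M0 P₁ h11 h12
  have hdec2 : nuclearNorm Θ0 + nuclearNorm P₂ ≤ nuclearNorm (Θ0 + P₂) :=
    nn_decomp Θ0 P₂ h21 h22
  -- triangle inequalities
  have htr1 : nuclearNorm (M0 + P₁) ≤ nuclearNorm Mt + nuclearNorm (Δ₁ - P₁) := by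
    have h := nn_triangle Mt (-(Δ₁ - P₁))
    rw [nn_neg] at h
    have e2 : M0 + P₁ = Mt + -(Δ₁ - P₁) := by rw [hΔ₁]; abel
    rw [e2]
    exact h
  have htr2 : nuclearNorm (Θ0 + P₂) ≤ nuclearNorm Θt + nuclearNorm (Δ₂ - P₂) := by
    have h := nn_triangle Θt (-(Δ₂ - P₂))
    rw [nn_neg] at h
    have e2 : Θ0 + P₂ = Θt + -(Δ₂ - P₂) := by rw [hΔ₂]; abel
    rw [e2]
    exact h
  have htΔ1 : nuclearNorm Δ₁ ≤ nuclearNorm P₁ + nuclearNorm (Δ₁ - P₁) := by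
    have h := nn_triangle P₁ (Δ₁ - P₁)
    have e2 : P₁ + (Δ₁ - P₁) = Δ₁ := by abel
    rw [e2] at h
    exact h
  have htΔ2 : nuclearNorm Δ₂ ≤ nuclearNorm P₂ + nuclearNorm (Δ₂ - P₂) := by
    have h := nn_triangle P₂ (Δ₂ - P₂)
    have e2 : P₂ + (Δ₂ - P₂) = Δ₂ := by abel
    rw [e2] at h
    exact h
  -- minimization at the true parameters
  have hopt := hmin M0 Θ0
  have hYMt : Y - Mt - X ⊙ Θt = U - D := by
    have hθ0 : Θ0 + Δ₂ = Θt := by rw [hΔ₂]; abel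
    have hθ : X ⊙ Θt = X ⊙ Θ0 + X ⊙ Δ₂ := by rw [← Matrix.hadamard_add, hθ0]
    rw [hY, hθ, hD, hΔ₁]
    abel
  have hYM0 : Y - M0 - X ⊙ Θ0 = U := by rw [hY]; abel
  rw [hYMt, hYM0, frob_expand] at hopt
  -- splitting the inner product
  set T1 : ℝ := ∑ i, ∑ j, U i j * Δ₁ i j with hT1
  set T2 : ℝ := ∑ i, ∑ j, (X ⊙ U) i j * Δ₂ i j with hT2
  have hip : ∑ i, ∑ j, U i j * D i j = T1 + T2 := by
    rw [hT1, hT2, ← Finset.sum_add_distrib]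
    apply Finset.sum_congr rfl; intro i _
    rw [← Finset.sum_add_distrib]
    apply Finset.sum_congr rfl; intro j _
    rw [hD]
    simp only [Matrix.add_apply, Matrix.hadamard_apply]
    ring
  rw [hip] at hopt
  -- duality bounds
  have hb1 : T1 ≤ nuclearNorm Δ₁ * opNorm U := ip_dual U Δ₁
  have hb2 : T2 ≤ nuclearNorm Δ₂ * opNorm (X ⊙ U) := ip_dual (X ⊙ U) Δ₂
  have hν2' : (0:ℝ) < (1 - c) * ν₂ :=
    lt_of_le_of_lt (mul_nonneg (by norm_num) (op_nonneg U)) hscoreU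
  have hν1' : (0:ℝ) < (1 - c) * ν₁ :=
    lt_of_le_of_lt (mul_nonneg (by norm_num) (op_nonneg (X ⊙ U))) hscoreXU
  have hg1 : 2 * T1 ≤ (1 - c) * ν₂ * (nuclearNorm P₁ + nuclearNorm (Δ₁ - P₁)) := by
    calc 2 * T1 ≤ 2 * (nuclearNorm Δ₁ * opNorm U) := by linarith
      _ = (2 * opNorm U) * nuclearNorm Δ₁ := by ring
      _ ≤ ((1 - c) * ν₂) * nuclearNorm Δ₁ :=
        mul_le_mul_of_nonneg_right hscoreU.le (nn_nonneg _)
      _ ≤ (1 - c) * ν₂ * (nuclearNorm P₁ + nuclearNorm (Δ₁ - P₁)) :=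
        mul_le_mul_of_nonneg_left htΔ1 hν2'.le
  have hg2 : 2 * T2 ≤ (1 - c) * ν₁ * (nuclearNorm P₂ + nuclearNorm (Δ₂ - P₂)) := by
    calc 2 * T2 ≤ 2 * (nuclearNorm Δ₂ * opNorm (X ⊙ U)) := by linarith
      _ = (2 * opNorm (X ⊙ U)) * nuclearNorm Δ₂ := by ring
      _ ≤ ((1 - c) * ν₁) * nuclearNorm Δ₂ :=
        mul_le_mul_of_nonneg_right hscoreXU.le (nn_nonneg _)
      _ ≤ (1 - c) * ν₁ * (nuclearNorm P₂ + nuclearNorm (Δ₂ - P₂)) :=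
        mul_le_mul_of_nonneg_left htΔ2 hν1'.le
  have hm1 : ν₂ * (nuclearNorm M0 - nuclearNorm Mt) ≤
      ν₂ * (nuclearNorm (Δ₁ - P₁) - nuclearNorm P₁) :=
    mul_le_mul_of_nonneg_left (by linarith) hν₂.le
  have hm2 : ν₁ * (nuclearNorm Θ0 - nuclearNorm Θt) ≤
      ν₁ * (nuclearNorm (Δ₂ - P₂) - nuclearNorm P₂) :=
    mul_le_mul_of_nonneg_left (by linarith) hν₁.le
  nlinarith [hopt, hg1, hg2, hm1, hm2]
end
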